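/- arXiv:2209.08761 — 6 statements merged into one kernel-verified Lean document; each statement's English description precedes it below -/
import Mathlib

section
/- Uniqueness of the quantum reliability operator: if L is a self-adjoint operator on ℓ²_ℂ(Λ_G) such that ψ ↦ ⟨ψ|L|ψ⟩ restricted to unit vectors takes values in [0,1] and satisfies the extension axiom and the entanglement axiom, then L equals the orthogonal projection onto the span of the connected classical states. -/
open scoped Classical
noncomputable section

/-- A finite set has finitely many setoids (partitions). -/
instance setoidFinite (U : Type) [Finite U] : Finite (Setoid U) :=
  Finite.of_injective (fun s => s.r)
    (fun _ _ h => Setoid.ext fun x y => iff_of_eq (congrFun (congrFun h x) y))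

noncomputable instance setoidFintype (U : Type) [Finite U] : Fintype (Setoid U) :=
  Fintype.ofFinite _

/-- Adjacency via an operating edge of the state `ε`. -/
def edgeAdj {V E : Type} (s t : E → V) (ε : E → Bool) (x y : V) : Prop :=
  ∃ e, ε e = true ∧ ((s e = x ∧ t e = y) ∨ (s e = y ∧ t e = x))

/-- Connectivity of the spanning subgraph determined by `ε`, on the vertex set `S`,
after further identifying vertices via the relation `σ`. -/
def ConnectedModOn {V E : Type} (S : Set V) (s t : E → V) (σ : V → V → Prop)
    (ε : E → Bool) : Prop :=
  ∀ x ∈ S, ∀ y ∈ S, Relation.EqvGen (fun a b => edgeAdj s t ε a b ∨ σ a b) x y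

/-- A state is connected if the spanning subgraph of operating edges is connected. -/
def ConnectedState {V E : Type} (S : Set V) (s t : E → V) (ε : E → Bool) : Prop :=
  ConnectedModOn S s t (fun _ _ => False) ε

/-- The identification relation on vertices induced by a partition (setoid) `γ` of `U`. -/
def partRel {V : Type} (U : Set V) (γ : Setoid ↥U) : V → V → Prop :=
  fun a b => ∃ (ha : a ∈ U) (hb : b ∈ U), γ.r ⟨a, ha⟩ ⟨b, hb⟩

/-- The state `ε` has no islands: every vertex of `S` is joined to some vertex of `U`. -/
def NoIslands {V E : Type} (S U : Set V) (s t : E → V) (ε : E → Bool) : Prop :=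
  ∀ x ∈ S, ∃ u ∈ U, Relation.EqvGen (edgeAdj s t ε) x u

/-- The partition `P(ε)` of `U` induced by the connected components of the state `ε`. -/
def inducedPart {V E : Type} (U : Set V) (s t : E → V) (ε : E → Bool) : Setoid ↥U :=
  ⟨fun u u' => Relation.EqvGen (edgeAdj s t ε) u.1 u'.1,
    ⟨fun u => Relation.EqvGen.refl u.1,
     fun h => Relation.EqvGen.symm _ _ h,
     fun h h' => Relation.EqvGen.trans _ _ _ h h'⟩⟩

/-- Probability of the classical state `ε` given Bernoulli parameters `p`. -/
def stProb {E : Type} [Fintype E] (p : E → ℝ) (ε : E → Bool) : ℝ :=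
  ∏ e, if ε e then p e else 1 - p e

/-- Reliability: probability that the random state satisfies the connectivity
predicate `Conn`. -/
def relOf {E : Type} [Fintype E] (p : E → ℝ) (Conn : (E → Bool) → Prop) : ℝ :=
  ∑ ε : E → Bool, if Conn ε then stProb p ε else 0

/-- The hermitian inner product of `ℓ²_ℂ(Λ)`, antilinear in the first argument. -/
def qdot {Λ : Type} [Fintype Λ] (x y : Λ → ℂ) : ℂ :=
  ∑ ε, (starRingEnd ℂ) (x ε) * y ε

/-- The orthogonal projection of `ℓ²_ℂ(Λ)` onto the span of `{|ε⟩ : ε ∈ C}`. -/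
def projC {Λ : Type} [Fintype Λ] (C : Set Λ) : (Λ → ℂ) →ₗ[ℂ] (Λ → ℂ) where
  toFun ψ := fun ε => if ε ∈ C then ψ ε else 0
  map_add' x y := by funext ε; by_cases h : ε ∈ C <;> simp [h]
  map_smul' c x := by funext ε; by_cases h : ε ∈ C <;> simp [h]

/-- Tensor product of operators under `ℓ²(Λ₁ × Λ₂) ≅ ℓ²(Λ₁) ⊗ ℓ²(Λ₂)`. -/
def tensorOp {A B : Type} [Fintype A] [Fintype B]
    (F : (A → ℂ) →ₗ[ℂ] (A → ℂ)) (G : (B → ℂ) →ₗ[ℂ] (B → ℂ)) :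
    (A × B → ℂ) →ₗ[ℂ] (A × B → ℂ) where
  toFun ψ := fun q => ∑ x : A × B, ψ x *
    (F (fun a => if a = x.1 then 1 else 0) q.1 * G (fun b => if b = x.2 then 1 else 0) q.2)
  map_add' x y := by
    funext q
    simp [add_mul, Finset.sum_add_distrib]
  map_smul' c x := by
    funext q
    simp only [Pi.smul_apply, smul_eq_mul, RingHom.id_apply]
    rw [Finset.mul_sum]
    exact Finset.sum_congr rfl (fun x _ => by ring)

/-- Tensor product of state vectors. -/
def vtens {A B : Type} (ψ₁ : A → ℂ) (ψ₂ : B → ℂ) : A × B → ℂ :=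
  fun q => ψ₁ q.1 * ψ₂ q.2

/-- Entry of the connectivity matrix: `1` if the common coarsening of the two
partitions has a single block, `0` otherwise.  (In Mathlib's order on `Setoid U`,
the common coarsening is the join `γ ⊔ γ'`, and having a single block means `= ⊤`.) -/
def connMatrix (U : Type) [Finite U] : Matrix (Setoid U) (Setoid U) ℝ :=
  fun γ γ' => if γ ⊔ γ' = ⊤ then 1 else 0


section QRAux
variable {Λ : Type} [Fintype Λ]

/-- Standard basis vector. -/
def qδ (ε : Λ) : Λ → ℂ := fun ε' => if ε' = ε then 1 else 0

lemma qdot_delta_left (ε : Λ) (y : Λ → ℂ) : qdot (qδ ε) y = y ε := by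
  simp [qdot, qδ, apply_ite (starRingEnd ℂ), ite_mul]

lemma qdot_conj (x y : Λ → ℂ) : (starRingEnd ℂ) (qdot y x) = qdot x y := by
  simp [qdot, map_sum, mul_comm]

lemma qdot_expand (a b : ℂ) (x x' y : Λ → ℂ) :
    qdot (a • x + b • x') y
      = (starRingEnd ℂ) a * qdot x y + (starRingEnd ℂ) b * qdot x' y := by
  simp only [qdot, Pi.add_apply, Pi.smul_apply, smul_eq_mul, map_add, map_mul,
    Finset.mul_sum]
  rw [← Finset.sum_add_distrib]
  exact Finset.sum_congr rfl fun ε _ => by ring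

lemma qdot_form (L : (Λ → ℂ) →ₗ[ℂ] (Λ → ℂ)) (a b : ℂ) (ζ χ : Λ) :
    qdot (a • qδ ζ + b • qδ χ) (L (a • qδ ζ + b • qδ χ))
      = (starRingEnd ℂ) a * (a * (L (qδ ζ)) ζ + b * (L (qδ χ)) ζ)
        + (starRingEnd ℂ) b * (a * (L (qδ ζ)) χ + b * (L (qδ χ)) χ) := by
  rw [map_add, map_smul, map_smul, qdot_expand, qdot_delta_left, qdot_delta_left]
  simp

lemma pair_eq [DecidableEq Λ] (a b : ℂ) (ζ χ : Λ) (h : ζ ≠ χ) :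
    (fun ε => if ε = ζ then a else if ε = χ then b else 0)
      = a • qδ ζ + b • qδ χ := by
  funext ε
  by_cases h1 : ε = ζ
  · subst h1; simp [qδ, h]
  · by_cases h2 : ε = χ <;> simp [qδ, h1, h2, Ne.symm h]

lemma conj_mul_self_of_norm {z : ℂ} (hz : ‖z‖ = 1) : (starRingEnd ℂ) z * z = 1 := by
  rw [mul_comm, Complex.mul_conj, Complex.normSq_eq_norm_sq, hz]
  norm_num

lemma sqrt_half_sq : ((Real.sqrt (1/2) : ℝ) : ℂ) * ((Real.sqrt (1/2) : ℝ) : ℂ) = 1/2 := by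
  rw [← Complex.ofReal_mul, Real.mul_self_sqrt (by norm_num)]
  norm_num

lemma sqrt_half' : ((Real.sqrt (1 - 1/2) : ℝ) : ℂ) = ((Real.sqrt (1/2) : ℝ) : ℂ) := by
  norm_num

lemma qnorm_pair [DecidableEq Λ] (z : ℂ) (hz : ‖z‖ = 1) (ζ χ : Λ) (h : ζ ≠ χ) :
    qdot (fun ε => if ε = ζ then ((Real.sqrt (1/2) : ℝ) : ℂ)
        else if ε = χ then z * ((Real.sqrt (1 - 1/2) : ℝ) : ℂ) else 0)
      (fun ε => if ε = ζ then ((Real.sqrt (1/2) : ℝ) : ℂ)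
        else if ε = χ then z * ((Real.sqrt (1 - 1/2) : ℝ) : ℂ) else 0) = 1 := by
  rw [pair_eq _ _ _ _ h, qdot_expand, qdot_delta_left, qdot_delta_left]
  rw [sqrt_half']
  simp only [Pi.add_apply, Pi.smul_apply, smul_eq_mul, qδ, eq_self_iff_true, if_true,
    if_neg h, if_neg (Ne.symm h), map_mul, Complex.conj_ofReal, mul_zero, mul_one,
    add_zero, zero_add]
  linear_combination (1 + (starRingEnd ℂ) z * z) * sqrt_half_sq
    + (conj_mul_self_of_norm hz) / 2

lemma qform_pair [DecidableEq Λ] (L : (Λ → ℂ) →ₗ[ℂ] (Λ → ℂ)) (z : ℂ) (hz : ‖z‖ = 1)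
    (ζ χ : Λ) (h : ζ ≠ χ) :
    qdot (fun ε => if ε = ζ then ((Real.sqrt (1/2) : ℝ) : ℂ)
        else if ε = χ then z * ((Real.sqrt (1 - 1/2) : ℝ) : ℂ) else 0)
      (L (fun ε => if ε = ζ then ((Real.sqrt (1/2) : ℝ) : ℂ)
        else if ε = χ then z * ((Real.sqrt (1 - 1/2) : ℝ) : ℂ) else 0)) * 2
      = (L (qδ ζ)) ζ + z * (L (qδ χ)) ζ
        + (starRingEnd ℂ) z * (L (qδ ζ)) χ + (L (qδ χ)) χ := by
  rw [pair_eq _ _ _ _ h, qdot_form]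
  rw [sqrt_half']
  simp only [map_mul, Complex.conj_ofReal]
  linear_combination (2 * (L (qδ ζ)) ζ + 2 * z * (L (qδ χ)) ζ
      + 2 * (starRingEnd ℂ) z * (L (qδ ζ)) χ
      + 2 * (starRingEnd ℂ) z * z * (L (qδ χ)) χ) * sqrt_half_sq
    + (L (qδ χ)) χ * (conj_mul_self_of_norm hz)

end QRAux

/-- uniqueness of the quantum reliability operator.  A self-adjoint
operator with quadratic form in `[0,1]` on unit vectors satisfying the extension
axiom and the entanglement axiom is the projection onto the span of connected states. -/
theorem qr_operator_unique {V E : Type} [Fintype V] [Fintype E] (s t : E → V)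
    (L : ((E → Bool) → ℂ) →ₗ[ℂ] ((E → Bool) → ℂ))
    (hsa : ∀ x y : (E → Bool) → ℂ, qdot (L x) y = qdot x (L y))
    (hrange : ∀ ψ : (E → Bool) → ℂ, qdot ψ ψ = 1 →
        ∃ r : ℝ, qdot ψ (L ψ) = (r : ℂ) ∧ 0 ≤ r ∧ r ≤ 1)
    (hext : ∀ (p : E → ℝ) (z : E → ℂ), (∀ e, p e ∈ Set.Icc (0:ℝ) 1) →
        (∀ e, ‖z e‖ = 1) →
        qdot (fun ε : E → Bool =>
            ∏ e, if ε e then (Real.sqrt (p e) : ℂ) else z e * Real.sqrt (1 - p e))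
          (L (fun ε : E → Bool =>
            ∏ e, if ε e then (Real.sqrt (p e) : ℂ) else z e * Real.sqrt (1 - p e)))
          = (relOf p (ConnectedState Set.univ s t) : ℂ))
    (hent : ∀ (ζ χ : E → Bool) (z : ℂ) (p : ℝ),
        ConnectedState Set.univ s t ζ → ¬ ConnectedState Set.univ s t χ →
        ‖z‖ = 1 → p ∈ Set.Icc (0:ℝ) 1 →
        qdot (fun ε : E → Bool =>
            if ε = ζ then (Real.sqrt p : ℂ)
            else if ε = χ then z * Real.sqrt (1 - p) else 0)
          (L (fun ε : E → Bool =>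
            if ε = ζ then (Real.sqrt p : ℂ)
            else if ε = χ then z * Real.sqrt (1 - p) else 0))
          = (p : ℂ)) :
    L = projC {ε : E → Bool | ConnectedState Set.univ s t ε} := by
  have hz1 : ‖(1:ℂ)‖ = 1 := norm_one
  have hzm1 : ‖(-1:ℂ)‖ = 1 := by simp
  have hzI : ‖Complex.I‖ = 1 := Complex.norm_I
  have hzmI : ‖(-Complex.I)‖ = 1 := by simp [Complex.norm_I]
  -- diagonal entries
  have hdiag : ∀ ε : E → Bool,
      (L (qδ ε)) ε = if ConnectedState Set.univ s t ε then 1 else 0 := by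
    intro ε
    set p : E → ℝ := fun e => if ε e then 1 else 0 with hp
    have hpI : ∀ e, p e ∈ Set.Icc (0:ℝ) 1 := by
      intro e; by_cases h : ε e <;> simp [hp, h]
    have key := hext p (fun _ => 1) hpI (fun _ => norm_one)
    have hvec : (fun ε' : E → Bool =>
        ∏ e, if ε' e then (Real.sqrt (p e) : ℂ) else (1:ℂ) * Real.sqrt (1 - p e)) = qδ ε := by
      funext ε'
      have hfac : ∀ e, (if ε' e then (Real.sqrt (p e) : ℂ) else (1:ℂ) * Real.sqrt (1 - p e))
          = if ε' e = ε e then 1 else 0 := by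
        intro e; cases h1 : ε e <;> cases h2 : ε' e <;> norm_num [hp, h1, h2]
      simp only [hfac]
      by_cases h : ε' = ε
      · subst h; simp [qδ]
      · obtain ⟨e, he⟩ := Function.ne_iff.mp h
        rw [Finset.prod_eq_zero (Finset.mem_univ e) (by simp [he])]
        simp [qδ, h]
    have hst : ∀ ε' : E → Bool, stProb p ε' = if ε' = ε then 1 else 0 := by
      intro ε'
      have hfac : ∀ e, (if ε' e then p e else 1 - p e) = if ε' e = ε e then (1:ℝ) else 0 := by
        intro e; cases h1 : ε e <;> cases h2 : ε' e <;> norm_num [hp, h1, h2]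
      unfold stProb
      simp only [hfac]
      by_cases h : ε' = ε
      · subst h; simp
      · obtain ⟨e, he⟩ := Function.ne_iff.mp h
        rw [Finset.prod_eq_zero (Finset.mem_univ e) (by simp [he]), if_neg h]
    have hrel : relOf p (ConnectedState Set.univ s t)
        = if ConnectedState Set.univ s t ε then 1 else 0 := by
      unfold relOf
      have hsummand : ∀ ε' : E → Bool,
          (if ConnectedState Set.univ s t ε' then stProb p ε' else 0)
          = if ε' = ε then (if ConnectedState Set.univ s t ε then 1 else 0) else 0 := by
        intro ε'
        by_cases h : ε' = ε
        · subst h; rw [hst]; simp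
        · rw [hst, if_neg h]; simp [h]
      simp only [hsummand]
      simp
    rw [hvec, qdot_delta_left] at key
    rw [key, hrel]
    by_cases h : ConnectedState Set.univ s t ε <;> simp [h]
  -- key inequality for arbitrary pairs
  have key : ∀ (ζ χ : E → Bool), ζ ≠ χ → ∀ z : ℂ, ‖z‖ = 1 →
      ∃ r : ℝ, 0 ≤ r ∧ r ≤ 1 ∧
        (L (qδ ζ)) ζ + z * (L (qδ χ)) ζ
          + (starRingEnd ℂ) z * (L (qδ ζ)) χ + (L (qδ χ)) χ = (r : ℂ) * 2 := by
    intro ζ χ hne z hz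
    obtain ⟨r, hr, h0, h1⟩ := hrange _ (qnorm_pair z hz ζ χ hne)
    refine ⟨r, h0, h1, ?_⟩
    rw [← qform_pair L z hz ζ χ hne, hr]
  -- mixed pairs via entanglement axiom
  have hmix : ∀ ζ χ : E → Bool, ConnectedState Set.univ s t ζ →
      ¬ ConnectedState Set.univ s t χ →
      (L (qδ χ)) ζ = 0 ∧ (L (qδ ζ)) χ = 0 := by
    intro ζ χ hζ hχ
    have hne : ζ ≠ χ := fun h => hχ (h ▸ hζ)
    have hEq : ∀ z : ℂ, ‖z‖ = 1 →
        z * (L (qδ χ)) ζ + (starRingEnd ℂ) z * (L (qδ ζ)) χ = 0 := by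
      intro z hz
      have h2 := qform_pair L z hz ζ χ hne
      rw [hent ζ χ z (1/2) hζ hχ hz (Set.mem_Icc.mpr (by norm_num))] at h2
      rw [hdiag ζ, hdiag χ, if_pos hζ, if_neg hχ] at h2
      push_cast at h2
      linear_combination -h2
    have e1 := hEq 1 hz1
    have e2 := hEq Complex.I hzI
    simp only [one_mul, map_one, Complex.conj_I, neg_mul] at e1 e2
    constructor
    · linear_combination e1 / 2 - Complex.I * e2 / 2
        + ((L (qδ χ)) ζ - (L (qδ ζ)) χ) / 2 * Complex.I_sq
    · linear_combination e1 / 2 + Complex.I * e2 / 2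
        + ((L (qδ ζ)) χ - (L (qδ χ)) ζ) / 2 * Complex.I_sq
  -- same-class pairs via the range constraint
  have hsame : ∀ ζ χ : E → Bool, ζ ≠ χ →
      (ConnectedState Set.univ s t ζ ↔ ConnectedState Set.univ s t χ) →
      (L (qδ χ)) ζ = 0 := by
    intro ζ χ hne hiff
    obtain ⟨r1, h10, h11, e1⟩ := key ζ χ hne 1 hz1
    obtain ⟨r2, h20, h21, e2⟩ := key ζ χ hne (-1) hzm1
    obtain ⟨r3, h30, h31, e3⟩ := key ζ χ hne Complex.I hzI
    obtain ⟨r4, h40, h41, e4⟩ := key ζ χ hne (-Complex.I) hzmI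
    simp only [one_mul, map_one, map_neg, Complex.conj_I, neg_neg, neg_mul] at e1 e2 e3 e4
    by_cases hc : ConnectedState Set.univ s t ζ
    · have hcχ := hiff.mp hc
      rw [hdiag ζ, hdiag χ, if_pos hc, if_pos hcχ] at e1 e2 e3 e4
      have h12 : r1 + r2 = 2 := by
        have hcast : ((r1 + r2 : ℝ) : ℂ) = ((2:ℝ) : ℂ) := by
          push_cast; linear_combination (-(e1 + e2)) / 2
        exact_mod_cast hcast
      have h34 : r3 + r4 = 2 := by
        have hcast : ((r3 + r4 : ℝ) : ℂ) = ((2:ℝ) : ℂ) := by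
          push_cast; linear_combination (-(e3 + e4)) / 2
        exact_mod_cast hcast
      have hr1 : r1 = 1 := by linarith
      have hr3 : r3 = 1 := by linarith
      rw [hr1] at e1; rw [hr3] at e3
      push_cast at e1 e3
      linear_combination e1 / 2 - Complex.I * e3 / 2
        + ((L (qδ χ)) ζ - (L (qδ ζ)) χ) / 2 * Complex.I_sq
    · have hcχ : ¬ ConnectedState Set.univ s t χ := fun h => hc (hiff.mpr h)
      rw [hdiag ζ, hdiag χ, if_neg hc, if_neg hcχ] at e1 e2 e3 e4
      have h12 : r1 + r2 = 0 := by
        have hcast : ((r1 + r2 : ℝ) : ℂ) = ((0:ℝ) : ℂ) := by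
          push_cast; linear_combination (-(e1 + e2)) / 2
        exact_mod_cast hcast
      have h34 : r3 + r4 = 0 := by
        have hcast : ((r3 + r4 : ℝ) : ℂ) = ((0:ℝ) : ℂ) := by
          push_cast; linear_combination (-(e3 + e4)) / 2
        exact_mod_cast hcast
      have hr1 : r1 = 0 := by linarith
      have hr3 : r3 = 0 := by linarith
      rw [hr1] at e1; rw [hr3] at e3
      push_cast at e1 e3
      linear_combination e1 / 2 - Complex.I * e3 / 2
        + ((L (qδ χ)) ζ - (L (qδ ζ)) χ) / 2 * Complex.I_sq
  -- assemble
  refine Module.Basis.ext (Pi.basisFun ℂ (E → Bool)) fun ε => ?_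
  have hb : (Pi.basisFun ℂ (E → Bool)) ε = qδ ε := by
    funext ε'
    simp [Pi.basisFun_apply, qδ, Pi.single_apply]
  rw [hb]
  funext ε'
  by_cases h : ε' = ε
  · subst h
    rw [show ((projC {ε : E → Bool | ConnectedState Set.univ s t ε}) (qδ ε')) ε'
        = if ConnectedState Set.univ s t ε' then qδ ε' ε' else 0 from rfl]
    rw [hdiag]
    by_cases hc : ConnectedState Set.univ s t ε' <;> simp [qδ, hc]
  · have hL : (L (qδ ε)) ε' = 0 := by
      by_cases hc : ConnectedState Set.univ s t ε
      · by_cases hc' : ConnectedState Set.univ s t ε'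
        · exact hsame ε' ε h (by tauto)
        · exact (hmix ε ε' hc hc').2
      · by_cases hc' : ConnectedState Set.univ s t ε'
        · exact (hmix ε' ε hc' hc).1
        · exact hsame ε' ε h (by tauto)
    rw [hL,
      show ((projC {ε : E → Bool | ConnectedState Set.univ s t ε}) (qδ ε)) ε'
        = if ConnectedState Set.univ s t ε' then qδ ε ε' else 0 from rfl]
    simp [qδ, h]
end
end

section
/- On the lattice Γ(U) of partitions of a finite set U ordered by refinement, define α_{γ,γ'} = 1 if the meet γ ∧ γ' (the common coarsening) has exactly one block, and α_{γ,γ'} = 0 otherwise. Then the matrix M = (α_{γ,γ'}) indexed by Γ(U) × Γ(U) is invertible. -/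
open scoped Classical
noncomputable section

open Polynomial

/-- Möbius-type value: derivative of the falling factorial polynomial at 0. -/
noncomputable def mob (k : ℕ) : ℝ := (Polynomial.derivative (descPochhammer ℝ k)).eval 0

lemma mob_succ (k : ℕ) :
    mob (k + 1) = mob k * (-(k : ℝ)) + (descPochhammer ℝ k).eval 0 := by
  unfold mob
  rw [descPochhammer_succ_right, derivative_mul]
  simp

lemma mob_ne_zero {k : ℕ} (hk : k ≠ 0) : mob k ≠ 0 := by
  induction k with
  | zero => exact absurd rfl hk
  | succ n ih =>
    rcases Nat.eq_zero_or_pos n with h | h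
    · subst h
      simp [mob_succ, mob]
    · have hne : n ≠ 0 := Nat.pos_iff_ne_zero.mp h
      rw [mob_succ, descPochhammer_ne_zero_eval_zero (R := ℝ) hne, add_zero]
      exact mul_ne_zero (ih hne) (neg_ne_zero.mpr (Nat.cast_ne_zero.mpr hne))

/-- Fibers of the kernel map are embeddings of the quotient. -/
noncomputable def kerFiberEquiv {B X : Type} (π : Setoid B) :
    {f : B → X // Setoid.ker f = π} ≃ (Quotient π ↪ X) where
  toFun f := ⟨Quotient.lift f.1 (fun a b h => Setoid.ker_def.mp (f.2.symm ▸ h)), by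
    rintro ⟨a⟩ ⟨b⟩ h
    exact Quotient.sound (f.2 ▸ Setoid.ker_def.mpr h)⟩
  invFun g := ⟨g ∘ Quotient.mk π, by
    apply Setoid.ext; intro a b
    constructor
    · intro h
      exact Quotient.exact (g.injective (Setoid.ker_def.mp h))
    · intro h
      exact Setoid.ker_def.mpr (congrArg g (Quotient.sound h))⟩
  left_inv f := Subtype.ext (funext fun a => rfl)
  right_inv g := by
    refine Function.Embedding.ext fun q => ?_
    induction q using Quotient.ind
    rfl

lemma sum_mob_setoid (B : Type) [Finite B] [Nonempty B] :
    ∑ π : Setoid B, mob (Nat.card (Quotient π)) = if Nat.card B = 1 then 1 else 0 := by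
  classical
  cases nonempty_fintype B
  have hn1 : Nat.card B ≠ 0 := Nat.card_ne_zero.mpr ⟨‹_›, ‹_›⟩
  set n := Nat.card B with hn
  set P : ℝ[X] := ∑ π : Setoid B, descPochhammer ℝ (Nat.card (Quotient π)) with hP
  have heval : ∀ x : ℕ, P.eval (x : ℝ) = (x : ℝ) ^ n := by
    intro x
    have hcount : (∑ π : Setoid B, (x.descFactorial (Nat.card (Quotient π)))) = x ^ n := by
      have h1 : ∀ π : Setoid B, x.descFactorial (Nat.card (Quotient π))
          = Nat.card {f : B → Fin x // Setoid.ker f = π} := by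
        intro π
        letI : Fintype (Quotient π) := Fintype.ofFinite _
        rw [Nat.card_congr (kerFiberEquiv (X := Fin x) π),
          Nat.card_eq_fintype_card (α := Quotient π ↪ Fin x), Fintype.card_embedding_eq,
          Fintype.card_fin, Nat.card_eq_fintype_card (α := Quotient π)]
      simp_rw [h1]
      have h2 : Nat.card (B → Fin x) = x ^ n := by
        rw [Nat.card_eq_fintype_card (α := B → Fin x), Fintype.card_fun, Fintype.card_fin, hn,
          Nat.card_eq_fintype_card (α := B)]
      rw [← h2, ← Nat.card_congr (Equiv.sigmaFiberEquiv (Setoid.ker : (B → Fin x) → Setoid B))]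
      rw [Nat.card_eq_fintype_card
          (α := Σ π : Setoid B, {f : B → Fin x // Setoid.ker f = π}), Fintype.card_sigma]
      exact Finset.sum_congr rfl fun π _ =>
        Nat.card_eq_fintype_card (α := {f : B → Fin x // Setoid.ker f = π})
    rw [hP, eval_finset_sum]
    simp_rw [descPochhammer_eval_eq_descFactorial]
    rw [← Nat.cast_sum, hcount, Nat.cast_pow]
  have hPX : P = X ^ n := by
    have hz : P - X ^ n = 0 := by
      apply eq_zero_of_infinite_isRoot
      apply Set.Infinite.mono (s := Set.range (Nat.cast : ℕ → ℝ))
      · rintro _ ⟨x, rfl⟩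
        simp [IsRoot, heval x]
      · exact Set.infinite_range_of_injective Nat.cast_injective
    exact sub_eq_zero.mp hz
  have hder : (Polynomial.derivative P).eval 0 = ∑ π : Setoid B, mob (Nat.card (Quotient π)) := by
    rw [hP, map_sum, eval_finset_sum]
    rfl
  rw [← hder, hPX, derivative_X_pow, eval_mul, eval_C, eval_pow, eval_X]
  rcases eq_or_ne n 1 with h | h
  · simp [h]
  · rw [if_neg h, zero_pow (by omega), mul_zero]

/-- The correspondence between setoids above `σ` and setoids of the quotient. -/
noncomputable def aboveEquiv {U : Type} (σ : Setoid U) :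
    Setoid (Quotient σ) ≃ {τ : Setoid U // σ ≤ τ} where
  toFun π := ⟨Setoid.comap (Quotient.mk σ) π, fun x y h => by
    have : Quotient.mk σ x = Quotient.mk σ y := Quotient.sound h
    exact (Setoid.comap_rel _ _ _ _).mpr (this ▸ π.refl _)⟩
  invFun τ := Setoid.ker (Quotient.lift (Quotient.mk τ.1) (fun a b h => Quotient.sound (τ.2 h)))
  left_inv π := by
    apply Setoid.ext; intro a b
    induction a using Quotient.ind
    induction b using Quotient.ind
    rw [Setoid.ker_def]
    show Quotient.mk _ _ = Quotient.mk _ _ ↔ _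
    rw [Quotient.eq]
    exact Setoid.comap_rel _ _ _ _
  right_inv τ := by
    apply Subtype.ext
    apply Setoid.ext; intro a b
    rw [Setoid.comap_rel, Setoid.ker_def]
    show Quotient.mk _ _ = Quotient.mk _ _ ↔ _
    rw [Quotient.eq]

lemma aboveEquiv_card {U : Type} (σ : Setoid U) (π : Setoid (Quotient σ)) :
    Nat.card (Quotient ((aboveEquiv σ π).1 : Setoid U)) = Nat.card (Quotient π) := by
  refine Nat.card_eq_of_bijective
    (Quotient.lift (fun x => Quotient.mk π (Quotient.mk σ x))
      (fun a b h => Quotient.sound h)) ⟨?_, ?_⟩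
  · intro a b
    induction a using Quotient.ind with | _ x =>
    induction b using Quotient.ind with | _ y =>
    intro h
    have h' : Quotient.mk π (Quotient.mk σ x) = Quotient.mk π (Quotient.mk σ y) := h
    have h'' : π (Quotient.mk σ x) (Quotient.mk σ y) := Quotient.exact h'
    exact Quotient.sound h''
  · intro q
    induction q using Quotient.ind with | _ q =>
    induction q using Quotient.ind with | _ x =>
    exact ⟨Quotient.mk _ x, rfl⟩

lemma top_iff_card_one {U : Type} [Finite U] [Nonempty U] (σ : Setoid U) :
    σ = ⊤ ↔ Nat.card (Quotient σ) = 1 := by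
  constructor
  · rintro rfl
    rw [Nat.card_eq_one_iff_unique]
    constructor
    · constructor
      intro a b
      induction a using Quotient.ind
      induction b using Quotient.ind
      exact Quotient.sound trivial
    · exact ⟨Quotient.mk _ (Classical.arbitrary U)⟩
  · intro h
    have hs : Subsingleton (Quotient σ) := (Nat.card_eq_one_iff_unique.mp h).1
    refine le_antisymm le_top fun x y _ => ?_
    exact Quotient.exact (Subsingleton.elim (Quotient.mk σ x) (Quotient.mk σ y))

lemma sum_above (U : Type) [Finite U] [Nonempty U] (σ : Setoid U) :
    ∑ τ : Setoid U, (if σ ≤ τ then mob (Nat.card (Quotient τ)) else 0)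
      = if σ = ⊤ then 1 else 0 := by
  classical
  haveI : Nonempty (Quotient σ) := ⟨Quotient.mk σ (Classical.arbitrary U)⟩
  have step1 : ∑ τ : Setoid U, (if σ ≤ τ then mob (Nat.card (Quotient τ)) else 0)
      = ∑ τ : {τ : Setoid U // σ ≤ τ}, mob (Nat.card (Quotient τ.1)) := by
    rw [← Finset.sum_filter]
    exact Finset.sum_subtype (p := fun τ => σ ≤ τ) _ (fun τ => by simp) _
  have step2 : ∑ τ : {τ : Setoid U // σ ≤ τ}, mob (Nat.card (Quotient τ.1))
      = ∑ π : Setoid (Quotient σ), mob (Nat.card (Quotient π)) := by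
    exact (Fintype.sum_equiv (aboveEquiv σ) _ _ (fun π => by rw [aboveEquiv_card])).symm
  rw [step1, step2, sum_mob_setoid (Quotient σ), if_congr (top_iff_card_one σ).symm rfl rfl]

noncomputable def zetaM (U : Type) [Finite U] : Matrix (Setoid U) (Setoid U) ℝ :=
  Matrix.of fun γ σ => if γ ≤ σ then (1 : ℝ) else 0

noncomputable def diagM (U : Type) [Finite U] : Matrix (Setoid U) (Setoid U) ℝ :=
  Matrix.diagonal (fun σ => mob (Nat.card (Quotient σ)))

/-- the connectivity matrix of the partition lattice of a finite
nonempty set is invertible. -/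
theorem connectivity_matrix_invertible (U : Type) [Finite U] [Nonempty U] :
    IsUnit (connMatrix U) := by
  classical
  have factor : connMatrix U = zetaM U * diagM U * (zetaM U).transpose := by
    ext γ γ'
    rw [Matrix.mul_apply]
    simp_rw [diagM, Matrix.mul_diagonal, Matrix.transpose_apply]
    have key : ∀ σ : Setoid U, zetaM U γ σ * mob (Nat.card (Quotient σ)) * zetaM U γ' σ
        = if γ ⊔ γ' ≤ σ then mob (Nat.card (Quotient σ)) else 0 := by
      intro σ
      rw [zetaM]
      simp only [Matrix.of_apply]
      rw [show (γ ⊔ γ' ≤ σ) = (γ ≤ σ ∧ γ' ≤ σ) from propext sup_le_iff]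
      by_cases h1 : γ ≤ σ <;> by_cases h2 : γ' ≤ σ <;> simp [h1, h2]
    simp_rw [key]
    rw [sum_above U (γ ⊔ γ')]
    rfl
  have hZ : IsUnit (zetaM U) := by
    rw [← Matrix.mulVec_injective_iff_isUnit]
    have key : ∀ v : Setoid U → ℝ, (zetaM U).mulVec v = 0 → v = 0 := by
      intro v hv
      funext σ
      induction σ using WellFoundedGT.induction with | _ σ IH =>
      have h0 : ((zetaM U).mulVec v) σ = 0 := by rw [hv]; rfl
      rw [Matrix.mulVec, dotProduct] at h0
      simp only [zetaM, Matrix.of_apply, ite_mul, one_mul, zero_mul] at h0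
      rw [← Finset.sum_filter] at h0
      have hsplit : Finset.univ.filter (fun τ => σ ≤ τ)
          = insert σ (Finset.univ.filter (fun τ => σ < τ)) := by
        ext τ
        simp [le_iff_lt_or_eq, or_comm, eq_comm]
      rw [hsplit, Finset.sum_insert (by simp)] at h0
      have hrest : ∑ τ ∈ Finset.univ.filter (fun τ => σ < τ), v τ = 0 := by
        apply Finset.sum_eq_zero
        intro τ hτ
        exact IH τ (by simpa using hτ)
      rw [hrest, add_zero] at h0
      simpa using h0
    intro v w hvw
    have hz : (zetaM U).mulVec (v - w) = 0 := by
      rw [Matrix.mulVec_sub, hvw, sub_self]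
    exact sub_eq_zero.mp (key _ hz)
  have hD : IsUnit (diagM U) := by
    rw [Matrix.isUnit_iff_isUnit_det, diagM, Matrix.det_diagonal, isUnit_iff_ne_zero]
    apply Finset.prod_ne_zero_iff.mpr
    intro σ _
    apply mob_ne_zero
    exact Nat.card_ne_zero.mpr ⟨⟨Quotient.mk σ (Classical.arbitrary U)⟩, inferInstance⟩
  have hZt : IsUnit (zetaM U).transpose := by
    rw [Matrix.isUnit_iff_isUnit_det, Matrix.det_transpose,
      ← Matrix.isUnit_iff_isUnit_det]
    exact hZ
  rw [factor]
  exact (hZ.mul hD).mul hZt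
end
end

section
/- Let G be a finite graph that is the union of subgraphs K and H sharing only the vertex set U = V(K) ∩ V(H), so that E(G) = E(K) ⊔ E(H). Then a state ε = (ε_K, ε_H) of G is connected if and only if ε_H has no islands and the state ε_K is connected in the quotient graph K/P(ε_H). Equivalently, C(G) = ⋃_{ε ∈ Λ̂_H} C(K/P(ε)) × {ε}, a disjoint union. -/
open scoped Classical
noncomputable section

theorem edgeAdj_symm' {V E : Type} {s t : E → V} {ε : E → Bool} :
    Symmetric (edgeAdj s t ε) := fun _ _ ⟨e, he, h⟩ => ⟨e, he, h.symm⟩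

theorem eqvGen_iff_rtg {V : Type} {r : V → V → Prop} (hsymm : Symmetric r) {x y : V} :
    Relation.EqvGen r x y ↔ Relation.ReflTransGen r x y := by
  constructor
  · intro h
    induction h with
    | rel a b h => exact Relation.ReflTransGen.single h
    | refl => exact .refl
    | symm a b _ ih => exact (@Relation.ReflTransGen.stdSymm _ _ ⟨hsymm⟩).symm _ _ ih
    | trans a b c _ _ ih1 ih2 => exact ih1.trans ih2
  · intro h
    induction h with
    | refl => exact .refl _
    | tail _ h ih => exact ih.trans _ _ _ (.rel _ _ h)

theorem eqvGen_mono' {V : Type} {r s : V → V → Prop} (h : ∀ a b, r a b → Relation.EqvGen s a b)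
    {x y : V} (hxy : Relation.EqvGen r x y) : Relation.EqvGen s x y := by
  induction hxy with
  | rel a b hab => exact h a b hab
  | refl => exact .refl _
  | symm a b _ ih => exact ih.symm _ _
  | trans a b c _ _ ih1 ih2 => exact ih1.trans _ _ _ ih2

theorem sum_edgeAdj_iff {V EK EH : Type} (sK tK : EK → V) (sH tH : EH → V)
    (εK : EK → Bool) (εH : EH → Bool) (x y : V) :
    edgeAdj (Sum.elim sK sH) (Sum.elim tK tH) (Sum.elim εK εH) x y ↔
      edgeAdj sK tK εK x y ∨ edgeAdj sH tH εH x y := by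
  constructor
  · rintro ⟨e, he, h⟩
    cases e with
    | inl e => exact Or.inl ⟨e, he, h⟩
    | inr e => exact Or.inr ⟨e, he, h⟩
  · rintro (⟨e, he, h⟩ | ⟨e, he, h⟩)
    · exact ⟨Sum.inl e, he, h⟩
    · exact ⟨Sum.inr e, he, h⟩

theorem edgeAdj_mem {V E : Type} {s t : E → V} {ε : E → Bool} {S : Set V}
    (hS : ∀ e, s e ∈ S ∧ t e ∈ S) {x y : V} (h : edgeAdj s t ε x y) : x ∈ S ∧ y ∈ S := by
  obtain ⟨e, _, (⟨h1, h2⟩ | ⟨h1, h2⟩)⟩ := h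
  · exact ⟨h1 ▸ (hS e).1, h2 ▸ (hS e).2⟩
  · exact ⟨h2 ▸ (hS e).2, h1 ▸ (hS e).1⟩

/-- a state `(ε_K, ε_H)` of the union `G = K ∪ H` sharing only the
vertices `U = V(K) ∩ V(H)` is connected iff `ε_H` has no islands and `ε_K` is
connected in the quotient graph `K/P(ε_H)`. -/
theorem connected_union_characterization {V EK EH : Type}
    [Fintype V] [Fintype EK] [Fintype EH]
    (VK VH : Set V) (hcover : VK ∪ VH = Set.univ) (hU : (VK ∩ VH).Nonempty)
    (sK tK : EK → V) (hK : ∀ e, sK e ∈ VK ∧ tK e ∈ VK)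
    (sH tH : EH → V) (hH : ∀ e, sH e ∈ VH ∧ tH e ∈ VH)
    (εK : EK → Bool) (εH : EH → Bool) :
    ConnectedState Set.univ (Sum.elim sK sH) (Sum.elim tK tH) (Sum.elim εK εH)
      ↔ (NoIslands VH (VK ∩ VH) sH tH εH ∧
          ConnectedModOn VK sK tK
            (partRel (VK ∩ VH) (inducedPart (VK ∩ VH) sH tH εH)) εK) := by
  set adjK := edgeAdj sK tK εK with hadjK
  set adjH := edgeAdj sH tH εH with hadjH
  set adjG := edgeAdj (Sum.elim sK sH) (Sum.elim tK tH) (Sum.elim εK εH) with hadjG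
  set σ := partRel (VK ∩ VH) (inducedPart (VK ∩ VH) sH tH εH) with hσ
  have hGsymm : Symmetric adjG := edgeAdj_symm'
  have hG' : (fun a b => adjG a b ∨ False) = adjG := by
    funext a b; simp
  have hKG : ∀ a b, adjK a b → adjG a b := fun a b h =>
    (sum_edgeAdj_iff sK tK sH tH εK εH a b).2 (Or.inl h)
  have hHG : ∀ a b, adjH a b → adjG a b := fun a b h =>
    (sum_edgeAdj_iff sK tK sH tH εK εH a b).2 (Or.inr h)
  constructor
  · intro hconn
    have hconn' : ∀ x y : V, Relation.ReflTransGen adjG x y := by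
      intro x y
      have := hconn x (Set.mem_univ x) y (Set.mem_univ y)
      rw [hG'] at this
      exact (eqvGen_iff_rtg hGsymm).1 this
    obtain ⟨u0, hu0⟩ := hU
    -- no islands
    have noisl : NoIslands VH (VK ∩ VH) sH tH εH := by
      intro x hx
      have key : ∀ a, Relation.ReflTransGen adjG a u0 → a ∈ VH →
          ∃ u ∈ VK ∩ VH, Relation.EqvGen adjH a u := by
        intro a ha
        induction ha using Relation.ReflTransGen.head_induction_on with
        | refl => exact fun _ => ⟨u0, hu0, .refl _⟩
        | head hac hcu0 ih =>
          rename_i a c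
          intro haH
          rcases (sum_edgeAdj_iff sK tK sH tH εK εH a c).1 hac with hk | hh
          · exact ⟨a, ⟨(edgeAdj_mem hK hk).1, haH⟩, .refl _⟩
          · obtain ⟨u, hu, p⟩ := ih (edgeAdj_mem hH hh).2
            exact ⟨u, hu, .trans _ _ _ (.rel _ _ hh) p⟩
      exact key x (hconn' x u0) hx
    refine ⟨noisl, ?_⟩
    -- connectivity of K mod σ
    intro x hxK y hyK
    set R := fun a b => adjK a b ∨ σ a b with hR
    have key : ∀ a, Relation.ReflTransGen adjG a y →
        (a ∈ VK → Relation.EqvGen R a y) ∧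
        (a ∈ VH → ∃ u ∈ VK ∩ VH, Relation.EqvGen adjH a u ∧ Relation.EqvGen R u y) := by
      intro a ha
      induction ha using Relation.ReflTransGen.head_induction_on with
      | refl =>
        refine ⟨fun _ => .refl _, fun hyH => ⟨y, ⟨hyK, hyH⟩, .refl _, .refl _⟩⟩
      | head hac hcy ih =>
        rename_i a c
        rcases (sum_edgeAdj_iff sK tK sH tH εK εH a c).1 hac with hk | hh
        · have haK := (edgeAdj_mem hK hk).1
          have hcK := (edgeAdj_mem hK hk).2
          have h1 : Relation.EqvGen R a y :=
            .trans _ _ _ (.rel _ _ (Or.inl hk)) (ih.1 hcK)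
          exact ⟨fun _ => h1, fun haH => ⟨a, ⟨haK, haH⟩, .refl _, h1⟩⟩
        · have haH := (edgeAdj_mem hH hh).1
          have hcH := (edgeAdj_mem hH hh).2
          have h2 : ∃ u ∈ VK ∩ VH, Relation.EqvGen adjH a u ∧ Relation.EqvGen R u y := by
            obtain ⟨u, hu, p, q⟩ := ih.2 hcH
            exact ⟨u, hu, .trans _ _ _ (.rel _ _ hh) p, q⟩
          refine ⟨fun haK => ?_, fun _ => h2⟩
          obtain ⟨u, hu, p, q⟩ := h2
          have hσau : σ a u := ⟨⟨haK, haH⟩, hu, p⟩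
          exact .trans _ _ _ (.rel _ _ (Or.inr hσau)) q
    exact (key x (hconn' x y)).1 hxK
  · rintro ⟨noisl, hKconn⟩
    obtain ⟨u0, hu0⟩ := hU
    -- R ≤ EqvGen adjG
    have hRG : ∀ a b, (adjK a b ∨ σ a b) → Relation.EqvGen adjG a b := by
      rintro a b (hk | ⟨_, _, p⟩)
      · exact .rel _ _ (hKG a b hk)
      · exact eqvGen_mono' (fun a b h => .rel _ _ (hHG a b h)) p
    have toU0 : ∀ x : V, Relation.EqvGen adjG x u0 := by
      intro x
      have hx : x ∈ VK ∪ VH := hcover ▸ Set.mem_univ x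
      have fromK : ∀ z ∈ VK, Relation.EqvGen adjG z u0 := by
        intro z hz
        exact eqvGen_mono' hRG (hKconn z hz u0 hu0.1)
      rcases hx with hxK | hxH
      · exact fromK x hxK
      · obtain ⟨u, hu, p⟩ := noisl x hxH
        exact .trans _ _ _
          (eqvGen_mono' (fun a b h => .rel _ _ (hHG a b h)) p) (fromK u hu.1)
    intro x _ y _
    rw [hG']
    exact .trans _ _ _ (toU0 x) ((toU0 y).symm _ _)
end
end

section
/- Let G be a finite graph that is the union of graphs K and H sharing only the vertices U. For each partition γ' of U, the quantum reliability operator of H/γ' satisfies Q̂R_{H/γ'} = Σ_{γ ∈ Γ(U)} α_{γ',γ} Ô_γ, where α_{γ',γ} = 1 if γ ∧ γ' has a single block and 0 otherwise. -/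
open scoped Classical
noncomputable section

section Key
variable {V E : Type} (VH U : Set V) (s t : E → V) (ε : E → Bool) (γ' : Setoid ↥U)

local notation "R" => Relation.EqvGen (edgeAdj s t ε)
local notation "S" => Relation.EqvGen (fun a b => edgeAdj s t ε a b ∨ partRel U γ' a b)
def rUn : ↥U → ↥U → Prop := fun p q => (inducedPart U s t ε).r p q ∨ γ'.r p q
local notation "R'" => Relation.EqvGen (rUn U s t ε γ')

lemma forward_struct {a b : V} (h : S a b) :
    R a b ∨ (∃ u, ∃ (hu : u ∈ U), ∃ v, ∃ (hv : v ∈ U), R a u ∧ R b v ∧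
      R' (⟨u, hu⟩ : ↥U) ⟨v, hv⟩) := by
  induction h with
  | rel a b hab =>
    rcases hab with hE | ⟨ha, hb, hγ⟩
    · exact Or.inl (Relation.EqvGen.rel _ _ hE)
    · exact Or.inr ⟨a, ha, b, hb, Relation.EqvGen.refl a, Relation.EqvGen.refl b,
        Relation.EqvGen.rel _ _ (Or.inr hγ)⟩
  | refl a => exact Or.inl (Relation.EqvGen.refl a)
  | symm a b _ ih =>
    rcases ih with h | ⟨u, hu, v, hv, hau, hbv, huv⟩
    · exact Or.inl (Relation.EqvGen.symm _ _ h)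
    · exact Or.inr ⟨v, hv, u, hu, hbv, hau, Relation.EqvGen.symm _ _ huv⟩
  | trans a b c _ _ ih₁ ih₂ =>
    rcases ih₁ with h₁ | ⟨u₁, hu₁, v₁, hv₁, hau, hbv, huv⟩
    · rcases ih₂ with h₂ | ⟨u₂, hu₂, v₂, hv₂, hbu, hcv, huv₂⟩
      · exact Or.inl (Relation.EqvGen.trans _ _ _ h₁ h₂)
      · exact Or.inr ⟨u₂, hu₂, v₂, hv₂, Relation.EqvGen.trans _ _ _ h₁ hbu, hcv, huv₂⟩
    · rcases ih₂ with h₂ | ⟨u₂, hu₂, v₂, hv₂, hbu, hcv, huv₂⟩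
      · exact Or.inr ⟨u₁, hu₁, v₁, hv₁, hau,
          Relation.EqvGen.trans _ _ _ (Relation.EqvGen.symm _ _ h₂) hbv, huv⟩
      · refine Or.inr ⟨u₁, hu₁, v₂, hv₂, hau, hcv, ?_⟩
        refine Relation.EqvGen.trans _ _ _ huv (Relation.EqvGen.trans _ _ _ ?_ huv₂)
        exact Relation.EqvGen.rel _ _ (Or.inl
          (Relation.EqvGen.trans _ _ _ (Relation.EqvGen.symm _ _ hbv) hbu))

lemma lift_R' {p q : ↥U} (h : R' p q) : S p.1 q.1 := by
  induction h with
  | rel p q hpq =>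
    rcases hpq with h | h
    · exact Relation.EqvGen.mono (fun a b h => Or.inl h) _ _ h
    · exact Relation.EqvGen.rel _ _ (Or.inr ⟨p.2, q.2, by
        simpa using h⟩)
  | refl p => exact Relation.EqvGen.refl _
  | symm _ _ _ ih => exact Relation.EqvGen.symm _ _ ih
  | trans _ _ _ _ _ ih₁ ih₂ => exact Relation.EqvGen.trans _ _ _ ih₁ ih₂

lemma key (hUH : U ⊆ VH) (hU : U.Nonempty) :
    ConnectedModOn VH s t (partRel U γ') ε ↔
      (NoIslands VH U s t ε ∧ inducedPart U s t ε ⊔ γ' = ⊤) := by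
  constructor
  · intro hcon
    obtain ⟨u₀, hu₀⟩ := hU
    constructor
    · intro x hx
      rcases forward_struct U s t ε γ' (hcon x hx u₀ (hUH hu₀)) with h | ⟨u, hu, _, _, hau, _⟩
      · exact ⟨u₀, hu₀, h⟩
      · exact ⟨u, hu, hau⟩
    · rw [Setoid.sup_eq_eqvGen]
      ext p q
      simp only [Setoid.top_def, Pi.top_apply, Prop.top_eq_true, iff_true]
      show R' p q
      rcases forward_struct U s t ε γ' (hcon p.1 (hUH p.2) q.1 (hUH q.2)) with h |
        ⟨u, hu, v, hv, hau, hbv, huv⟩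
      · exact Relation.EqvGen.rel _ _ (Or.inl h)
      · refine Relation.EqvGen.trans _ _ _ (Relation.EqvGen.rel _ _ (Or.inl ?_))
          (Relation.EqvGen.trans _ _ _ huv (Relation.EqvGen.rel _ _ (Or.inl ?_)))
        · exact hau
        · exact Relation.EqvGen.symm _ _ hbv
  · rintro ⟨hni, htop⟩ x hx y hy
    obtain ⟨u, hu, hxu⟩ := hni x hx
    obtain ⟨v, hv, hyv⟩ := hni y hy
    have h1 : S x u := Relation.EqvGen.mono (fun a b h => Or.inl h) _ _ hxu
    have h3 : S v y := Relation.EqvGen.symm _ _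
      (Relation.EqvGen.mono (fun a b h => Or.inl h) _ _ hyv)
    have h2 : S u v := by
      refine lift_R' U s t ε γ' (p := ⟨u, hu⟩) (q := ⟨v, hv⟩) ?_
      have : (inducedPart U s t ε ⊔ γ') ⟨u, hu⟩ ⟨v, hv⟩ := by rw [htop]; trivial
      rw [Setoid.sup_eq_eqvGen] at this; exact this
    exact Relation.EqvGen.trans _ _ _ h1 (Relation.EqvGen.trans _ _ _ h2 h3)

end Key

/-- `Q̂R_{H/γ'} = Σ_γ α_{γ',γ} Ô_γ`, where `α_{γ',γ} = 1` iff the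
common coarsening of `γ` and `γ'` has a single block. -/
theorem qr_operator_quotient_H {V EH : Type} [Fintype V] [Fintype EH]
    (VK VH : Set V) (hcover : VK ∪ VH = Set.univ) (hU : (VK ∩ VH).Nonempty)
    (sH tH : EH → V) (hH : ∀ e, sH e ∈ VH ∧ tH e ∈ VH)
    (γ' : Setoid ↥(VK ∩ VH)) :
    projC {ε : EH → Bool | ConnectedModOn VH sH tH (partRel (VK ∩ VH) γ') ε}
      = ∑ γ : Setoid ↥(VK ∩ VH),
          (if γ ⊔ γ' = ⊤ then (1 : ℂ) else 0) •
            projC {ε : EH → Bool | NoIslands VH (VK ∩ VH) sH tH ε ∧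
                inducedPart (VK ∩ VH) sH tH ε = γ} := by
  apply LinearMap.ext; intro ψ; funext ε
  have hiff := key VH (VK ∩ VH) sH tH ε γ' Set.inter_subset_right hU
  rw [LinearMap.sum_apply]
  simp only [LinearMap.smul_apply, projC, LinearMap.coe_mk, AddHom.coe_mk, Set.mem_setOf_eq,
    Pi.smul_apply, Finset.sum_apply, smul_eq_mul]
  by_cases hN : NoIslands VH (VK ∩ VH) sH tH ε
  · rw [Finset.sum_eq_single (inducedPart (VK ∩ VH) sH tH ε)]
    · by_cases hT : inducedPart (VK ∩ VH) sH tH ε ⊔ γ' = ⊤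
      · simp [hT, hN, hiff.mpr ⟨hN, hT⟩]
      · have hC : ¬ ConnectedModOn VH sH tH (partRel (VK ∩ VH) γ') ε :=
          fun h => hT (hiff.mp h).2
        simp [hT, hN, hC]
    · intro γ _ hne
      simp [Ne.symm hne]
    · simp
  · have : ¬ ConnectedModOn VH sH tH (partRel (VK ∩ VH) γ') ε := fun h => hN (hiff.mp h).1
    simp [hN, this]
end
end

section
/- Negami-like splitting for the quantum reliability operator: if G is the union of graphs K and H sharing only the vertices U = {u_1,…,u_m}, then Q̂R_G = Σ_{γ,γ' ∈ Γ(U)} β_{γ,γ'} Q̂R_{K/γ} ⊗ Q̂R_{H/γ'}, where (β_{γ,γ'}) is the inverse of the connectivity matrix (α_{γ,γ'}). -/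
open scoped Classical
noncomputable section

/-! ### Auxiliary lemmas -/

section AuxRel

open Relation

variable {V : Type}

lemma eqvGen_imp {α : Type*} {r s : α → α → Prop}
    (h : ∀ a b, r a b → Relation.EqvGen s a b) :
    ∀ a b, Relation.EqvGen r a b → Relation.EqvGen s a b := by
  intro a b hab
  induction hab with
  | rel x y h' => exact h x y h'
  | refl x => exact .refl x
  | symm x y _ ih => exact .symm _ _ ih
  | trans x y z _ _ ih1 ih2 => exact .trans _ _ _ ih1 ih2

lemma eqvGen_mem {E : Type} {VK : Set V} (s t : E → V)
    (hK : ∀ e, s e ∈ VK ∧ t e ∈ VK) (ε : E → Bool) {x y : V}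
    (h : Relation.EqvGen (edgeAdj s t ε) x y) :
    x = y ∨ (x ∈ VK ∧ y ∈ VK) := by
  induction h with
  | rel a b h' =>
    obtain ⟨e, _, h'⟩ := h'
    rcases h' with ⟨h1, h2⟩ | ⟨h1, h2⟩
    · exact Or.inr ⟨h1 ▸ (hK e).1, h2 ▸ (hK e).2⟩
    · exact Or.inr ⟨h2 ▸ (hK e).2, h1 ▸ (hK e).1⟩
  | refl a => exact Or.inl rfl
  | symm a b _ ih =>
    rcases ih with ih | ⟨h1, h2⟩
    · exact Or.inl ih.symm
    · exact Or.inr ⟨h2, h1⟩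
  | trans a b c _ _ ih1 ih2 =>
    rcases ih1 with ih1 | ⟨h1, h2⟩
    · rcases ih2 with ih2 | ⟨g1, g2⟩
      · exact Or.inl (ih1.trans ih2)
      · exact Or.inr ⟨ih1 ▸ g1, g2⟩
    · rcases ih2 with ih2 | ⟨g1, g2⟩
      · exact Or.inr ⟨h1, ih2 ▸ h2⟩
      · exact Or.inr ⟨h1, g2⟩

/-- Decomposition of equivalence generation for one graph plus a relation supported on `U`. -/
lemma decompK {E : Type} {U : Set V} (s t : E → V) (ε : E → Bool) (sR : V → V → Prop)
    (hsup : ∀ a b, sR a b → a ∈ U ∧ b ∈ U)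
    (Q : Setoid ↥U)
    (hbase : ∀ a b (ha : a ∈ U) (hb : b ∈ U), sR a b → Q.r ⟨a, ha⟩ ⟨b, hb⟩)
    (hP : ∀ u u' : ↥U, Relation.EqvGen (edgeAdj s t ε) u.1 u'.1 → Q.r u u')
    {x y : V} (h : Relation.EqvGen (fun a b => edgeAdj s t ε a b ∨ sR a b) x y) :
    Relation.EqvGen (edgeAdj s t ε) x y ∨
      ∃ u u' : ↥U, Relation.EqvGen (edgeAdj s t ε) x u.1 ∧
        Relation.EqvGen (edgeAdj s t ε) y u'.1 ∧ Q.r u u' := by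
  induction h with
  | rel a b h' =>
    rcases h' with h' | h'
    · exact Or.inl (.rel _ _ h')
    · obtain ⟨ha, hb⟩ := hsup _ _ h'
      exact Or.inr ⟨⟨a, ha⟩, ⟨b, hb⟩, .refl a, .refl b, hbase _ _ _ _ h'⟩
  | refl a => exact Or.inl (.refl a)
  | symm a b _ ih =>
    rcases ih with ih | ⟨u, u', h1, h2, h3⟩
    · exact Or.inl (.symm _ _ ih)
    · exact Or.inr ⟨u', u, h2, h1, Q.iseqv.symm h3⟩
  | trans a b c _ _ ih1 ih2 =>
    rcases ih1 with ih1 | ⟨u, u', h1, h2, h3⟩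
    · rcases ih2 with ih2 | ⟨v, v', g1, g2, g3⟩
      · exact Or.inl (.trans _ _ _ ih1 ih2)
      · exact Or.inr ⟨v, v', .trans _ _ _ ih1 g1, g2, g3⟩
    · rcases ih2 with ih2 | ⟨v, v', g1, g2, g3⟩
      · exact Or.inr ⟨u, u', h1, .trans _ _ _ (.symm _ _ ih2) h2, h3⟩
      · have hm : Q.r u' v := hP _ _ (.trans _ _ _ (.symm _ _ h2) g1)
        exact Or.inr ⟨u, v', h1, g2, Q.iseqv.trans (Q.iseqv.trans h3 hm) g3⟩

/-- Lifting an equivalence generated on the subtype `U` back to `V`. -/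
lemma liftSub {U : Set V} {r : V → V → Prop} {Q1 Q2 : ↥U → ↥U → Prop}
    (h1 : ∀ u u' : ↥U, Q1 u u' → Relation.EqvGen r u.1 u'.1)
    (h2 : ∀ u u' : ↥U, Q2 u u' → Relation.EqvGen r u.1 u'.1) :
    ∀ u u' : ↥U, Relation.EqvGen (fun a b => Q1 a b ∨ Q2 a b) u u' →
      Relation.EqvGen r u.1 u'.1 := by
  intro u u' h
  induction h with
  | rel a b h' => rcases h' with h' | h'
                  · exact h1 _ _ h'
                  · exact h2 _ _ h'
  | refl a => exact .refl a.1
  | symm a b _ ih => exact .symm _ _ ih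
  | trans a b c _ _ ih1 ih2 => exact .trans _ _ _ ih1 ih2

/-- Characterization of connectivity modulo a partition of `U` for a single graph. -/
lemma connModOn_iff {E : Type} (VK U : Set V) (hUK : U ⊆ VK) (hUne : U.Nonempty)
    (s t : E → V) (hK : ∀ e, s e ∈ VK ∧ t e ∈ VK) (γ : Setoid ↥U) (ε : E → Bool) :
    ConnectedModOn VK s t (partRel U γ) ε ↔
      ((∀ x ∈ VK, ∃ u : ↥U, Relation.EqvGen (edgeAdj s t ε) x u.1) ∧
        inducedPart U s t ε ⊔ γ = ⊤) := by
  set PK := inducedPart U s t ε with hPK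
  have hsup : ∀ a b, partRel U γ a b → a ∈ U ∧ b ∈ U := by
    rintro a b ⟨ha, hb, _⟩; exact ⟨ha, hb⟩
  have hbase : ∀ a b (ha : a ∈ U) (hb : b ∈ U), partRel U γ a b →
      (PK ⊔ γ).r ⟨a, ha⟩ ⟨b, hb⟩ := by
    rintro a b ha hb ⟨ha', hb', hγ⟩
    exact Setoid.le_def.mp le_sup_right hγ
  have hP : ∀ u u' : ↥U, Relation.EqvGen (edgeAdj s t ε) u.1 u'.1 → (PK ⊔ γ).r u u' :=
    fun u u' h => Setoid.le_def.mp le_sup_left h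
  constructor
  · intro h
    obtain ⟨u0, hu0⟩ := hUne
    constructor
    · intro x hx
      have hd := decompK s t ε (partRel U γ) hsup (PK ⊔ γ) hbase hP
        (h x hx u0 (hUK hu0))
      rcases hd with hd | ⟨u, u', h1, _, _⟩
      · exact ⟨⟨u0, hu0⟩, hd⟩
      · exact ⟨u, h1⟩
    · apply Setoid.eq_top_iff.mpr
      intro u u'
      have hd := decompK s t ε (partRel U γ) hsup (PK ⊔ γ) hbase hP
        (h u.1 (hUK u.2) u'.1 (hUK u'.2))
      rcases hd with hd | ⟨v, v', h1, h2, h3⟩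
      · exact hP u u' hd
      · exact (PK ⊔ γ).iseqv.trans (hP u v h1)
          ((PK ⊔ γ).iseqv.trans h3 ((PK ⊔ γ).iseqv.symm (hP u' v' h2)))
  · rintro ⟨hni, htop⟩ x hx y hy
    obtain ⟨u, hu⟩ := hni x hx
    obtain ⟨u', hu'⟩ := hni y hy
    rw [Setoid.sup_eq_eqvGen] at htop
    have hq : Relation.EqvGen (fun a b : ↥U => PK.r a b ∨ γ.r a b) u u' :=
      Setoid.eq_top_iff.mp htop u u'
    have step : ∀ a b : V, edgeAdj s t ε a b →
        Relation.EqvGen (fun a b => edgeAdj s t ε a b ∨ partRel U γ a b) a b :=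
      fun a b h' => .rel _ _ (Or.inl h')
    have hx' : Relation.EqvGen (fun a b => edgeAdj s t ε a b ∨ partRel U γ a b) x u.1 :=
      eqvGen_imp step _ _ hu
    have hy' : Relation.EqvGen (fun a b => edgeAdj s t ε a b ∨ partRel U γ a b) y u'.1 :=
      eqvGen_imp step _ _ hu'
    have hmid : Relation.EqvGen (fun a b => edgeAdj s t ε a b ∨ partRel U γ a b) u.1 u'.1 := by
      refine liftSub (Q1 := fun a b : ↥U => PK.r a b) (Q2 := fun a b : ↥U => γ.r a b)
        ?_ ?_ u u' hq
      · intro v v' hv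
        exact eqvGen_imp step _ _ hv
      · intro v v' hv
        exact .rel _ _ (Or.inr ⟨v.2, v'.2, hv⟩)
    exact .trans _ _ _ (.trans _ _ _ hx' hmid) (.symm _ _ hy')

end AuxRel

section AuxG

open Relation

variable {V EK EH : Type}

lemma sumAdj (sK tK : EK → V) (sH tH : EH → V) (ε1 : EK → Bool) (ε2 : EH → Bool)
    (x y : V) :
    edgeAdj (Sum.elim sK sH) (Sum.elim tK tH) (Sum.elim ε1 ε2) x y ↔
      edgeAdj sK tK ε1 x y ∨ edgeAdj sH tH ε2 x y := by
  constructor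
  · rintro ⟨e, he, h⟩
    cases e with
    | inl e => exact Or.inl ⟨e, he, h⟩
    | inr e => exact Or.inr ⟨e, he, h⟩
  · rintro (⟨e, he, h⟩ | ⟨e, he, h⟩)
    · exact ⟨Sum.inl e, he, h⟩
    · exact ⟨Sum.inr e, he, h⟩

/-- Decomposition lemma for the glued graph. -/
lemma decompG (VK VH : Set V)
    (sK tK : EK → V) (hK : ∀ e, sK e ∈ VK ∧ tK e ∈ VK)
    (sH tH : EH → V) (hH : ∀ e, sH e ∈ VH ∧ tH e ∈ VH)
    (ε1 : EK → Bool) (ε2 : EH → Bool)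
    {x y : V}
    (h : Relation.EqvGen (fun a b => edgeAdj sK tK ε1 a b ∨ edgeAdj sH tH ε2 a b) x y) :
    Relation.EqvGen (edgeAdj sK tK ε1) x y ∨ Relation.EqvGen (edgeAdj sH tH ε2) x y ∨
      ∃ u u' : ↥(VK ∩ VH),
        (Relation.EqvGen (edgeAdj sK tK ε1) x u.1 ∨ Relation.EqvGen (edgeAdj sH tH ε2) x u.1) ∧
        (Relation.EqvGen (edgeAdj sK tK ε1) y u'.1 ∨ Relation.EqvGen (edgeAdj sH tH ε2) y u'.1) ∧
        (inducedPart (VK ∩ VH) sK tK ε1 ⊔ inducedPart (VK ∩ VH) sH tH ε2).r u u' := by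
  set U := VK ∩ VH with hUdef
  set Q := inducedPart U sK tK ε1 ⊔ inducedPart U sH tH ε2 with hQdef
  have qK : ∀ u u' : ↥U, Relation.EqvGen (edgeAdj sK tK ε1) u.1 u'.1 → Q.r u u' :=
    fun u u' h' => Setoid.le_def.mp le_sup_left h'
  have qH : ∀ u u' : ↥U, Relation.EqvGen (edgeAdj sH tH ε2) u.1 u'.1 → Q.r u u' :=
    fun u u' h' => Setoid.le_def.mp le_sup_right h'
  -- abbreviation for "touch": x is joined to u within one of the two graphs
  set TK := fun (a : V) (u : ↥U) => Relation.EqvGen (edgeAdj sK tK ε1) a u.1 with hTK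
  set TH := fun (a : V) (u : ↥U) => Relation.EqvGen (edgeAdj sH tH ε2) a u.1 with hTH
  -- ext: extend a touch backwards along one edge-relation step
  have ext : ∀ a b (u : ↥U),
      (Relation.EqvGen (edgeAdj sK tK ε1) a b ∨ Relation.EqvGen (edgeAdj sH tH ε2) a b) →
      (TK b u ∨ TH b u) → ∃ w : ↥U, (TK a w ∨ TH a w) ∧ Q.r w u := by
    rintro a b u (hab | hab) (hbu | hbu)
    · exact ⟨u, Or.inl (.trans _ _ _ hab hbu), Q.iseqv.refl u⟩
    · -- K-step then H-touch
      rcases eqvGen_mem sK tK hK ε1 hab with rfl | ⟨haK, hbK⟩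
      · exact ⟨u, Or.inr hbu, Q.iseqv.refl u⟩
      rcases eqvGen_mem sH tH hH ε2 hbu with heq | ⟨hbH, _⟩
      · subst heq; exact ⟨u, Or.inl hab, Q.iseqv.refl u⟩
      · refine ⟨⟨b, hbK, hbH⟩, Or.inl hab, qH _ _ hbu⟩
    · -- H-step then K-touch
      rcases eqvGen_mem sH tH hH ε2 hab with rfl | ⟨haH, hbH⟩
      · exact ⟨u, Or.inl hbu, Q.iseqv.refl u⟩
      rcases eqvGen_mem sK tK hK ε1 hbu with heq | ⟨hbK, _⟩
      · subst heq; exact ⟨u, Or.inr hab, Q.iseqv.refl u⟩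
      · refine ⟨⟨b, hbK, hbH⟩, Or.inr hab, qK _ _ hbu⟩
    · exact ⟨u, Or.inr (.trans _ _ _ hab hbu), Q.iseqv.refl u⟩
  -- join: two touches from the same vertex give a Q-relation
  have join : ∀ (b : V) (u u' : ↥U), (TK b u ∨ TH b u) → (TK b u' ∨ TH b u') → Q.r u u' := by
    rintro b u u' (hbu | hbu) (hbu' | hbu')
    · exact qK _ _ (.trans _ _ _ (.symm _ _ hbu) hbu')
    · rcases eqvGen_mem sK tK hK ε1 hbu with rfl | ⟨hbK, _⟩
      · exact qH _ _ hbu'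
      rcases eqvGen_mem sH tH hH ε2 hbu' with heq | ⟨hbH, _⟩
      · subst heq; exact Q.iseqv.symm (qK u' u hbu)
      · have hw : Q.r ⟨b, hbK, hbH⟩ u := qK _ _ hbu
        have hw' : Q.r ⟨b, hbK, hbH⟩ u' := qH _ _ hbu'
        exact Q.iseqv.trans (Q.iseqv.symm hw) hw'
    · rcases eqvGen_mem sH tH hH ε2 hbu with rfl | ⟨hbH, _⟩
      · exact qK _ _ hbu'
      rcases eqvGen_mem sK tK hK ε1 hbu' with heq | ⟨hbK, _⟩
      · subst heq; exact Q.iseqv.symm (qH u' u hbu)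
      · have hw : Q.r ⟨b, hbK, hbH⟩ u := qH _ _ hbu
        have hw' : Q.r ⟨b, hbK, hbH⟩ u' := qK _ _ hbu'
        exact Q.iseqv.trans (Q.iseqv.symm hw) hw'
    · exact qH _ _ (.trans _ _ _ (.symm _ _ hbu) hbu')
  induction h with
  | rel a b h' =>
    rcases h' with h' | h'
    · exact Or.inl (.rel _ _ h')
    · exact Or.inr (Or.inl (.rel _ _ h'))
  | refl a => exact Or.inl (.refl a)
  | symm a b _ ih =>
    rcases ih with ih | ih | ⟨u, u', h1, h2, h3⟩
    · exact Or.inl (.symm _ _ ih)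
    · exact Or.inr (Or.inl (.symm _ _ ih))
    · exact Or.inr (Or.inr ⟨u', u, h2, h1, Q.iseqv.symm h3⟩)
  | trans a b c _ _ ih1 ih2 =>
    rcases ih1 with ih1 | ih1 | ⟨u, u', h1, h2, h3⟩
    · rcases ih2 with ih2 | ih2 | ⟨v, v', g1, g2, g3⟩
      · exact Or.inl (.trans _ _ _ ih1 ih2)
      · -- K-path a-b then H-path b-c
        rcases eqvGen_mem sK tK hK ε1 ih1 with rfl | ⟨haK, hbK⟩
        · exact Or.inr (Or.inl ih2)
        rcases eqvGen_mem sH tH hH ε2 ih2 with rfl | ⟨hbH, hcH⟩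
        · exact Or.inl ih1
        · refine Or.inr (Or.inr ⟨⟨b, hbK, hbH⟩, ⟨b, hbK, hbH⟩,
            Or.inl ih1, Or.inr (.symm _ _ ih2), Q.iseqv.refl _⟩)
      · obtain ⟨w, hw, hwv⟩ := ext a b v (Or.inl ih1) g1
        exact Or.inr (Or.inr ⟨w, v', hw, g2, Q.iseqv.trans hwv g3⟩)
    · rcases ih2 with ih2 | ih2 | ⟨v, v', g1, g2, g3⟩
      · -- H-path a-b then K-path b-c
        rcases eqvGen_mem sH tH hH ε2 ih1 with rfl | ⟨haH, hbH⟩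
        · exact Or.inl ih2
        rcases eqvGen_mem sK tK hK ε1 ih2 with rfl | ⟨hbK, hcK⟩
        · exact Or.inr (Or.inl ih1)
        · refine Or.inr (Or.inr ⟨⟨b, hbK, hbH⟩, ⟨b, hbK, hbH⟩,
            Or.inr ih1, Or.inl (.symm _ _ ih2), Q.iseqv.refl _⟩)
      · exact Or.inr (Or.inl (.trans _ _ _ ih1 ih2))
      · obtain ⟨w, hw, hwv⟩ := ext a b v (Or.inr ih1) g1
        exact Or.inr (Or.inr ⟨w, v', hw, g2, Q.iseqv.trans hwv g3⟩)
    · rcases ih2 with ih2 | ih2 | ⟨v, v', g1, g2, g3⟩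
      · obtain ⟨w, hw, hwu'⟩ := ext c b u' (Or.inl (.symm _ _ ih2)) h2
        exact Or.inr (Or.inr ⟨u, w, h1, hw, Q.iseqv.trans h3 (Q.iseqv.symm hwu')⟩)
      · obtain ⟨w, hw, hwu'⟩ := ext c b u' (Or.inr (.symm _ _ ih2)) h2
        exact Or.inr (Or.inr ⟨u, w, h1, hw, Q.iseqv.trans h3 (Q.iseqv.symm hwu')⟩)
      · have hm : Q.r u' v := join b u' v h2 g1
        exact Or.inr (Or.inr ⟨u, v', h1, g2, Q.iseqv.trans (Q.iseqv.trans h3 hm) g3⟩)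

/-- Characterization of connectivity of the glued graph. -/
lemma connState_iff (VK VH : Set V) (hcover : VK ∪ VH = Set.univ)
    (hU : (VK ∩ VH).Nonempty)
    (sK tK : EK → V) (hK : ∀ e, sK e ∈ VK ∧ tK e ∈ VK)
    (sH tH : EH → V) (hH : ∀ e, sH e ∈ VH ∧ tH e ∈ VH)
    (ε1 : EK → Bool) (ε2 : EH → Bool) :
    ConnectedState Set.univ (Sum.elim sK sH) (Sum.elim tK tH) (Sum.elim ε1 ε2) ↔
      ((∀ x ∈ VK, ∃ u : ↥(VK ∩ VH), Relation.EqvGen (edgeAdj sK tK ε1) x u.1) ∧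
       (∀ x ∈ VH, ∃ u : ↥(VK ∩ VH), Relation.EqvGen (edgeAdj sH tH ε2) x u.1) ∧
       inducedPart (VK ∩ VH) sK tK ε1 ⊔ inducedPart (VK ∩ VH) sH tH ε2 = ⊤) := by
  set U := VK ∩ VH with hUdef
  set PK := inducedPart U sK tK ε1 with hPKdef
  set PH := inducedPart U sH tH ε2 with hPHdef
  have qK : ∀ u u' : ↥U, Relation.EqvGen (edgeAdj sK tK ε1) u.1 u'.1 → (PK ⊔ PH).r u u' :=
    fun u u' h' => Setoid.le_def.mp le_sup_left h'
  have qH : ∀ u u' : ↥U, Relation.EqvGen (edgeAdj sH tH ε2) u.1 u'.1 → (PK ⊔ PH).r u u' :=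
    fun u u' h' => Setoid.le_def.mp le_sup_right h'
  have conv : ∀ x y : V,
      Relation.EqvGen (fun a b =>
        edgeAdj (Sum.elim sK sH) (Sum.elim tK tH) (Sum.elim ε1 ε2) a b ∨ False) x y ↔
      Relation.EqvGen (fun a b => edgeAdj sK tK ε1 a b ∨ edgeAdj sH tH ε2 a b) x y := by
    intro x y
    constructor
    · apply eqvGen_imp
      rintro a b (h' | h')
      · exact .rel _ _ ((sumAdj sK tK sH tH ε1 ε2 a b).mp h')
      · exact absurd h' not_false
    · apply eqvGen_imp
      rintro a b (h' | h')
      · exact .rel _ _ (Or.inl ((sumAdj sK tK sH tH ε1 ε2 a b).mpr (Or.inl h')))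
      · exact .rel _ _ (Or.inl ((sumAdj sK tK sH tH ε1 ε2 a b).mpr (Or.inr h')))
  have touchK : ∀ x (u : ↥U), x ∈ VK →
      (Relation.EqvGen (edgeAdj sK tK ε1) x u.1 ∨ Relation.EqvGen (edgeAdj sH tH ε2) x u.1) →
      ∃ w : ↥U, Relation.EqvGen (edgeAdj sK tK ε1) x w.1 := by
    rintro x u hx (h' | h')
    · exact ⟨u, h'⟩
    · rcases eqvGen_mem sH tH hH ε2 h' with heq | ⟨hxH, _⟩
      · subst heq; exact ⟨u, .refl _⟩
      · exact ⟨⟨x, hx, hxH⟩, .refl x⟩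
  have touchH : ∀ x (u : ↥U), x ∈ VH →
      (Relation.EqvGen (edgeAdj sK tK ε1) x u.1 ∨ Relation.EqvGen (edgeAdj sH tH ε2) x u.1) →
      ∃ w : ↥U, Relation.EqvGen (edgeAdj sH tH ε2) x w.1 := by
    rintro x u hx (h' | h')
    · rcases eqvGen_mem sK tK hK ε1 h' with heq | ⟨hxK, _⟩
      · subst heq; exact ⟨u, .refl _⟩
      · exact ⟨⟨x, hxK, hx⟩, .refl x⟩
    · exact ⟨u, h'⟩
  constructor
  · intro h
    obtain ⟨u0, hu0⟩ := hU
    have hd : ∀ x y : V,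
        Relation.EqvGen (edgeAdj sK tK ε1) x y ∨ Relation.EqvGen (edgeAdj sH tH ε2) x y ∨
        ∃ u u' : ↥U,
          (Relation.EqvGen (edgeAdj sK tK ε1) x u.1 ∨
            Relation.EqvGen (edgeAdj sH tH ε2) x u.1) ∧
          (Relation.EqvGen (edgeAdj sK tK ε1) y u'.1 ∨
            Relation.EqvGen (edgeAdj sH tH ε2) y u'.1) ∧ (PK ⊔ PH).r u u' := by
      intro x y
      exact decompG VK VH sK tK hK sH tH hH ε1 ε2
        ((conv x y).mp (h x (Set.mem_univ x) y (Set.mem_univ y)))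
    refine ⟨?_, ?_, ?_⟩
    · intro x hx
      rcases hd x u0 with h' | h' | ⟨u, u', h1, _, _⟩
      · exact ⟨⟨u0, hu0⟩, h'⟩
      · exact touchK x ⟨u0, hu0⟩ hx (Or.inr h')
      · exact touchK x u hx h1
    · intro x hx
      rcases hd x u0 with h' | h' | ⟨u, u', h1, _, _⟩
      · exact touchH x ⟨u0, hu0⟩ hx (Or.inl h')
      · exact ⟨⟨u0, hu0⟩, h'⟩
      · exact touchH x u hx h1
    · apply Setoid.eq_top_iff.mpr
      intro u u'
      rcases hd u.1 u'.1 with h' | h' | ⟨v, v', h1, h2, h3⟩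
      · exact qK u u' h'
      · exact qH u u' h'
      · have t1 : (PK ⊔ PH).r u v := by
          rcases h1 with h1 | h1
          · exact qK u v h1
          · exact qH u v h1
        have t2 : (PK ⊔ PH).r u' v' := by
          rcases h2 with h2 | h2
          · exact qK u' v' h2
          · exact qH u' v' h2
        exact (PK ⊔ PH).iseqv.trans t1 ((PK ⊔ PH).iseqv.trans h3 ((PK ⊔ PH).iseqv.symm t2))
  · rintro ⟨hnK, hnH, htop⟩ x _ y _
    have reach : ∀ z : V, ∃ u : ↥U,
        Relation.EqvGen (fun a b => edgeAdj sK tK ε1 a b ∨ edgeAdj sH tH ε2 a b) z u.1 := by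
      intro z
      have hz : z ∈ VK ∪ VH := hcover ▸ Set.mem_univ z
      rcases hz with hz | hz
      · obtain ⟨u, hu⟩ := hnK z hz
        exact ⟨u, eqvGen_imp (fun a b h' => .rel _ _ (Or.inl h')) _ _ hu⟩
      · obtain ⟨u, hu⟩ := hnH z hz
        exact ⟨u, eqvGen_imp (fun a b h' => .rel _ _ (Or.inr h')) _ _ hu⟩
    obtain ⟨u, hu⟩ := reach x
    obtain ⟨u', hu'⟩ := reach y
    rw [Setoid.sup_eq_eqvGen] at htop
    have hq : Relation.EqvGen (fun a b : ↥U => PK.r a b ∨ PH.r a b) u u' :=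
      Setoid.eq_top_iff.mp htop u u'
    have hmid : Relation.EqvGen (fun a b => edgeAdj sK tK ε1 a b ∨ edgeAdj sH tH ε2 a b)
        u.1 u'.1 := by
      refine liftSub (Q1 := fun a b : ↥U => PK.r a b) (Q2 := fun a b : ↥U => PH.r a b)
        ?_ ?_ u u' hq
      · intro v v' hv
        exact eqvGen_imp (fun a b h' => .rel _ _ (Or.inl h')) _ _ hv
      · intro v v' hv
        exact eqvGen_imp (fun a b h' => .rel _ _ (Or.inr h')) _ _ hv
    exact (conv x y).mpr (.trans _ _ _ (.trans _ _ _ hu hmid) (.symm _ _ hu'))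

end AuxG

section AuxOp

lemma projC_apply {Λ : Type} [Fintype Λ] (C : Set Λ) (ψ : Λ → ℂ) (ε : Λ) :
    projC C ψ ε = if ε ∈ C then ψ ε else 0 := rfl

lemma tensorOp_projC {A B : Type} [Fintype A] [Fintype B] (C1 : Set A) (C2 : Set B)
    (ψ : A × B → ℂ) (q : A × B) :
    tensorOp (projC C1) (projC C2) ψ q =
      if q.1 ∈ C1 ∧ q.2 ∈ C2 then ψ q else 0 := by
  show (∑ x : A × B, ψ x *
      ((if q.1 ∈ C1 then (if q.1 = x.1 then (1:ℂ) else 0) else 0) *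
        (if q.2 ∈ C2 then (if q.2 = x.2 then (1:ℂ) else 0) else 0))) = _
  rw [Finset.sum_eq_single q]
  · by_cases h1 : q.1 ∈ C1 <;> by_cases h2 : q.2 ∈ C2 <;> simp [h1, h2]
  · intro x _ hx
    by_cases hx1 : q.1 = x.1
    · have hx2 : ¬ q.2 = x.2 := fun hh => hx (Prod.ext hx1.symm hh.symm)
      by_cases h1 : q.1 ∈ C1 <;> by_cases h2 : q.2 ∈ C2 <;> simp [h1, h2, hx1, hx2]
    · by_cases h1 : q.1 ∈ C1 <;> by_cases h2 : q.2 ∈ C2 <;> simp [h1, h2, hx1]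
  · intro h
    exact absurd (Finset.mem_univ q) h

lemma scalar_core {U : Type} [Finite U] [Fintype (Setoid U)]
    (β : Matrix (Setoid U) (Setoid U) ℂ)
    (hβ1 : β * (Matrix.of fun γ γ' : Setoid U =>
        if γ ⊔ γ' = ⊤ then (1 : ℂ) else 0) = 1)
    (PK PH : Setoid U) :
    (∑ γ : Setoid U, ∑ γ' : Setoid U, β γ γ' *
        (if PK ⊔ γ = ⊤ then (1:ℂ) else 0) * (if PH ⊔ γ' = ⊤ then (1:ℂ) else 0)) =
      if PK ⊔ PH = ⊤ then (1:ℂ) else 0 := by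
  set A : Matrix (Setoid U) (Setoid U) ℂ :=
    Matrix.of fun γ γ' : Setoid U => if γ ⊔ γ' = ⊤ then (1 : ℂ) else 0 with hA
  have hAsymm : ∀ γ γ' : Setoid U, A γ γ' = A γ' γ := by
    intro γ γ'
    simp only [hA, Matrix.of_apply, sup_comm γ γ']
  have key : (A * β * A) PK PH = A PK PH := by
    rw [Matrix.mul_assoc, hβ1, Matrix.mul_one]
  calc (∑ γ : Setoid U, ∑ γ' : Setoid U, β γ γ' *
        (if PK ⊔ γ = ⊤ then (1:ℂ) else 0) * (if PH ⊔ γ' = ⊤ then (1:ℂ) else 0))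
      = ∑ γ' : Setoid U, (∑ γ : Setoid U, A PK γ * β γ γ') * A γ' PH := by
        rw [Finset.sum_comm]
        refine Finset.sum_congr rfl fun γ' _ => ?_
        rw [Finset.sum_mul]
        refine Finset.sum_congr rfl fun γ _ => ?_
        have h1 : (if PK ⊔ γ = ⊤ then (1:ℂ) else 0) = A PK γ := rfl
        have h2 : A γ' PH = (if PH ⊔ γ' = ⊤ then (1:ℂ) else 0) := hAsymm γ' PH
        rw [h1, ← h2]; ring
    _ = (A * β * A) PK PH := by
        simp only [Matrix.mul_apply]
    _ = if PK ⊔ PH = ⊤ then (1:ℂ) else 0 := key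

end AuxOp
/-- the Negami-like splitting of the quantum reliability operator,
`Q̂R_G = Σ_{γ,γ'} β_{γ,γ'} Q̂R_{K/γ} ⊗ Q̂R_{H/γ'}`, where `β` is the inverse of
the connectivity matrix. -/
theorem qr_operator_negami_splitting {V EK EH : Type}
    [Fintype V] [Fintype EK] [Fintype EH]
    (VK VH : Set V) (hcover : VK ∪ VH = Set.univ) (hU : (VK ∩ VH).Nonempty)
    (sK tK : EK → V) (hK : ∀ e, sK e ∈ VK ∧ tK e ∈ VK)
    (sH tH : EH → V) (hH : ∀ e, sH e ∈ VH ∧ tH e ∈ VH)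
    (β : Matrix (Setoid ↥(VK ∩ VH)) (Setoid ↥(VK ∩ VH)) ℂ)
    (hβ : β * (Matrix.of fun γ γ' : Setoid ↥(VK ∩ VH) =>
            if γ ⊔ γ' = ⊤ then (1 : ℂ) else 0) = 1 ∧
          (Matrix.of fun γ γ' : Setoid ↥(VK ∩ VH) =>
            if γ ⊔ γ' = ⊤ then (1 : ℂ) else 0) * β = 1) :
    projC {εp : (EK → Bool) × (EH → Bool) |
        ConnectedState Set.univ (Sum.elim sK sH) (Sum.elim tK tH)
          (Sum.elim εp.1 εp.2)}
      = ∑ γ : Setoid ↥(VK ∩ VH), ∑ γ' : Setoid ↥(VK ∩ VH),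
          β γ γ' •
            tensorOp
              (projC {ε : EK → Bool |
                  ConnectedModOn VK sK tK (partRel (VK ∩ VH) γ) ε})
              (projC {ε : EH → Bool |
                  ConnectedModOn VH sH tH (partRel (VK ∩ VH) γ') ε}) := by
  obtain ⟨hβ1, hβ2⟩ := hβ
  apply LinearMap.ext
  intro ψ
  funext q
  have hL : projC {εp : (EK → Bool) × (EH → Bool) |
        ConnectedState Set.univ (Sum.elim sK sH) (Sum.elim tK tH)
          (Sum.elim εp.1 εp.2)} ψ q
      = (if ConnectedState Set.univ (Sum.elim sK sH) (Sum.elim tK tH)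
          (Sum.elim q.1 q.2) then (1:ℂ) else 0) * ψ q := by
    rw [projC_apply]
    by_cases h : ConnectedState Set.univ (Sum.elim sK sH) (Sum.elim tK tH)
        (Sum.elim q.1 q.2) <;> simp [Set.mem_setOf_eq, h]
  have hR : (∑ γ : Setoid ↥(VK ∩ VH), ∑ γ' : Setoid ↥(VK ∩ VH),
        β γ γ' •
          tensorOp
            (projC {ε : EK → Bool |
                ConnectedModOn VK sK tK (partRel (VK ∩ VH) γ) ε})
            (projC {ε : EH → Bool |
                ConnectedModOn VH sH tH (partRel (VK ∩ VH) γ') ε})) ψ q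
      = (∑ γ : Setoid ↥(VK ∩ VH), ∑ γ' : Setoid ↥(VK ∩ VH), β γ γ' *
          (if ConnectedModOn VK sK tK (partRel (VK ∩ VH) γ) q.1 then (1:ℂ) else 0) *
          (if ConnectedModOn VH sH tH (partRel (VK ∩ VH) γ') q.2 then (1:ℂ) else 0))
        * ψ q := by
    rw [LinearMap.sum_apply, Finset.sum_apply, Finset.sum_mul]
    refine Finset.sum_congr rfl fun γ _ => ?_
    rw [LinearMap.sum_apply, Finset.sum_apply, Finset.sum_mul]
    refine Finset.sum_congr rfl fun γ' _ => ?_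
    rw [LinearMap.smul_apply, Pi.smul_apply, smul_eq_mul, tensorOp_projC]
    simp only [Set.mem_setOf_eq]
    by_cases h1 : ConnectedModOn VK sK tK (partRel (VK ∩ VH) γ) q.1 <;>
      by_cases h2 : ConnectedModOn VH sH tH (partRel (VK ∩ VH) γ') q.2 <;>
      simp [h1, h2]
  rw [hL, hR]
  congr 1
  have eK : ∀ γ : Setoid ↥(VK ∩ VH),
      (if ConnectedModOn VK sK tK (partRel (VK ∩ VH) γ) q.1 then (1:ℂ) else 0) =
      (if ((∀ x ∈ VK, ∃ u : ↥(VK ∩ VH), Relation.EqvGen (edgeAdj sK tK q.1) x u.1) ∧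
          inducedPart (VK ∩ VH) sK tK q.1 ⊔ γ = ⊤) then (1:ℂ) else 0) := fun γ =>
    if_congr (connModOn_iff VK (VK ∩ VH) Set.inter_subset_left hU sK tK hK γ q.1) rfl rfl
  have eH : ∀ γ' : Setoid ↥(VK ∩ VH),
      (if ConnectedModOn VH sH tH (partRel (VK ∩ VH) γ') q.2 then (1:ℂ) else 0) =
      (if ((∀ x ∈ VH, ∃ u : ↥(VK ∩ VH), Relation.EqvGen (edgeAdj sH tH q.2) x u.1) ∧
          inducedPart (VK ∩ VH) sH tH q.2 ⊔ γ' = ⊤) then (1:ℂ) else 0) := fun γ' =>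
    if_congr (connModOn_iff VH (VK ∩ VH) Set.inter_subset_right hU sH tH hH γ' q.2) rfl rfl
  have eG : (if ConnectedState Set.univ (Sum.elim sK sH) (Sum.elim tK tH)
        (Sum.elim q.1 q.2) then (1:ℂ) else 0) =
      (if ((∀ x ∈ VK, ∃ u : ↥(VK ∩ VH), Relation.EqvGen (edgeAdj sK tK q.1) x u.1) ∧
          (∀ x ∈ VH, ∃ u : ↥(VK ∩ VH), Relation.EqvGen (edgeAdj sH tH q.2) x u.1) ∧
          inducedPart (VK ∩ VH) sK tK q.1 ⊔ inducedPart (VK ∩ VH) sH tH q.2 = ⊤)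
        then (1:ℂ) else 0) :=
    if_congr (connState_iff VK VH hcover hU sK tK hK sH tH hH q.1 q.2) rfl rfl
  rw [eG, Finset.sum_congr rfl fun γ _ => Finset.sum_congr rfl fun γ' _ => by
    rw [eK γ, eH γ']]
  by_cases hNK : ∀ x ∈ VK, ∃ u : ↥(VK ∩ VH), Relation.EqvGen (edgeAdj sK tK q.1) x u.1
  · by_cases hNH : ∀ x ∈ VH, ∃ u : ↥(VK ∩ VH), Relation.EqvGen (edgeAdj sH tH q.2) x u.1
    · rw [if_congr ((and_iff_right hNK).trans (and_iff_right hNH)) rfl rfl,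
        Finset.sum_congr rfl fun γ _ => Finset.sum_congr rfl fun γ' _ => by
          rw [if_congr (and_iff_right hNK) rfl rfl, if_congr (and_iff_right hNH) rfl rfl]]
      exact (scalar_core β hβ1 _ _).symm
    · rw [if_neg (fun h => hNH h.2.1)]
      symm
      refine Finset.sum_eq_zero fun γ _ => Finset.sum_eq_zero fun γ' _ => ?_
      have hz : (if ((∀ x ∈ VH, ∃ u : ↥(VK ∩ VH),
          Relation.EqvGen (edgeAdj sH tH q.2) x u.1) ∧
          inducedPart (VK ∩ VH) sH tH q.2 ⊔ γ' = ⊤) then (1:ℂ) else 0) = 0 :=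
        if_neg (fun h => hNH h.1)
      rw [hz, mul_zero]
  · rw [if_neg (fun h => hNK h.1)]
    symm
    refine Finset.sum_eq_zero fun γ _ => Finset.sum_eq_zero fun γ' _ => ?_
    rw [if_neg (fun h => hNK h.1), mul_zero, zero_mul]
end
end

section
/- Quantum sublayer correction formula: let G be a hybrid network realizing a classical network H with quantum sublayer K (V(K) ⊆ V(H), sharing node set V_K = V(K)). Then QR_G(ζ) = R_H((p_e)) + Σ_{γ ≠ t, γ'} β_{γ,γ'} QR_{K/γ}(ζ_K) R_{H/γ'}((p_e)), i.e. the γ = t (trivial partition) terms of the hybrid splitting sum to exactly the classical reliability R_H. -/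
open scoped Classical
noncomputable section

namespace QSCaux
open Relation

variable {V E : Type}

lemma eqvGen_mono' {r r' : V → V → Prop} (h : ∀ a b, r a b → EqvGen r' a b) :
    ∀ {x y}, EqvGen r x y → EqvGen r' x y := by
  intro x y hxy
  induction hxy with
  | rel a b hab => exact h a b hab
  | refl a => exact EqvGen.refl a
  | symm a b _ ih => exact EqvGen.symm a b ih
  | trans a b c _ _ ih1 ih2 => exact EqvGen.trans a b c ih1 ih2

lemma island_invariant {s t : E → V} {U : Set V} {γ : Setoid ↥U} {ε : E → Bool}
    {x y : V} (h : EqvGen (fun a b => edgeAdj s t ε a b ∨ partRel U γ a b) x y) :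
    (∃ u ∈ U, EqvGen (edgeAdj s t ε) x u) ↔ (∃ u ∈ U, EqvGen (edgeAdj s t ε) y u) := by
  induction h with
  | rel a b hab =>
    rcases hab with hab | ⟨ha, hb, _⟩
    · constructor
      · rintro ⟨u, hu, hxu⟩
        exact ⟨u, hu, EqvGen.trans _ _ _ (EqvGen.symm _ _ (EqvGen.rel _ _ hab)) hxu⟩
      · rintro ⟨u, hu, hyu⟩
        exact ⟨u, hu, EqvGen.trans _ _ _ (EqvGen.rel _ _ hab) hyu⟩
    · exact ⟨fun _ => ⟨b, hb, EqvGen.refl b⟩, fun _ => ⟨a, ha, EqvGen.refl a⟩⟩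
  | refl a => exact Iff.rfl
  | symm a b _ ih => exact ih.symm
  | trans a b c _ _ ih1 ih2 => exact ih1.trans ih2

/-- invariant carrying the partial chain in the quotient -/
lemma struct_invariant {s t : E → V} {U : Set V} {γ : Setoid ↥U} {ε : E → Bool}
    {x y : V} (h : EqvGen (fun a b => edgeAdj s t ε a b ∨ partRel U γ a b) x y) :
    EqvGen (edgeAdj s t ε) x y ∨
      ∃ (u u' : V) (hu : u ∈ U) (hu' : u' ∈ U),
        EqvGen (edgeAdj s t ε) x u ∧ EqvGen (edgeAdj s t ε) y u' ∧
        EqvGen (fun a b : ↥U => (inducedPart U s t ε).r a b ∨ γ.r a b) ⟨u, hu⟩ ⟨u', hu'⟩ := by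
  induction h with
  | rel a b hab =>
    rcases hab with hab | ⟨ha, hb, hγ⟩
    · exact Or.inl (EqvGen.rel _ _ hab)
    · exact Or.inr ⟨a, b, ha, hb, EqvGen.refl a, EqvGen.refl b, EqvGen.rel _ _ (Or.inr hγ)⟩
  | refl a => exact Or.inl (EqvGen.refl a)
  | symm a b _ ih =>
    rcases ih with h | ⟨u, u', hu, hu', h1, h2, h3⟩
    · exact Or.inl (EqvGen.symm _ _ h)
    · exact Or.inr ⟨u', u, hu', hu, h2, h1, EqvGen.symm _ _ h3⟩
  | trans a b c _ _ ih1 ih2 =>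
    rcases ih1 with h | ⟨u, u', hu, hu', h1, h2, h3⟩
    · rcases ih2 with h' | ⟨w, w', hw, hw', g1, g2, g3⟩
      · exact Or.inl (EqvGen.trans _ _ _ h h')
      · exact Or.inr ⟨w, w', hw, hw', EqvGen.trans _ _ _ h g1, g2, g3⟩
    · rcases ih2 with h' | ⟨w, w', hw, hw', g1, g2, g3⟩
      · exact Or.inr ⟨u, u', hu, hu', h1,
          EqvGen.trans _ _ _ (EqvGen.symm _ _ h') h2, h3⟩
      · refine Or.inr ⟨u, w', hu, hw', h1, g2, EqvGen.trans _ _ _ h3 ?_⟩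
        refine EqvGen.trans _ _ _ (EqvGen.rel _ _ (Or.inl ?_)) g3
        exact EqvGen.trans _ _ _ (EqvGen.symm _ _ h2) g1

lemma lift_sup {U : Set V} {s t : E → V} {γ : Setoid ↥U} {ε : E → Bool}
    {a b : ↥U}
    (h : EqvGen (fun a b : ↥U => (inducedPart U s t ε).r a b ∨ γ.r a b) a b) :
    EqvGen (fun a b => edgeAdj s t ε a b ∨ partRel U γ a b) a.1 b.1 := by
  induction h with
  | rel a b hab =>
    rcases hab with h | h
    · exact eqvGen_mono' (fun p q hpq => EqvGen.rel p q (Or.inl hpq)) h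
    · exact EqvGen.rel _ _ (Or.inr ⟨a.2, b.2, h⟩)
  | refl a => exact EqvGen.refl a.1
  | symm a b _ ih => exact EqvGen.symm _ _ ih
  | trans a b c _ _ ih1 ih2 => exact EqvGen.trans _ _ _ ih1 ih2

lemma sup_rel_iff {U : Set V} (P γ : Setoid ↥U) {a b : ↥U} :
    (P ⊔ γ).r a b ↔ EqvGen (fun a b : ↥U => P.r a b ∨ γ.r a b) a b := by
  rw [Setoid.sup_eq_eqvGen]
  exact Iff.rfl

lemma connectedModOn_iff {S U : Set V} (hUS : U ⊆ S) (hU : U.Nonempty)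
    (s t : E → V) (γ : Setoid ↥U) (ε : E → Bool) :
    ConnectedModOn S s t (partRel U γ) ε ↔
      (NoIslands S U s t ε ∧ inducedPart U s t ε ⊔ γ = ⊤) := by
  constructor
  · intro h
    obtain ⟨u₀, hu₀⟩ := hU
    constructor
    · intro x hx
      exact (island_invariant (h x hx u₀ (hUS hu₀))).mpr ⟨u₀, hu₀, EqvGen.refl u₀⟩
    · rw [Setoid.eq_top_iff]
      rintro ⟨u, hu⟩ ⟨u', hu'⟩
      rw [show ((inducedPart U s t ε ⊔ γ) ⟨u, hu⟩ ⟨u', hu'⟩) ↔ _ from sup_rel_iff _ _]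
      rcases struct_invariant (h u (hUS hu) u' (hUS hu')) with hh | ⟨w, w', hw, hw', h1, h2, h3⟩
      · exact EqvGen.rel _ _ (Or.inl hh)
      · refine EqvGen.trans _ _ _
          (EqvGen.rel (⟨u, hu⟩ : ↥U) ⟨w, hw⟩ (Or.inl h1)) ?_
        exact EqvGen.trans _ _ _ h3
          (EqvGen.symm _ _ (EqvGen.rel (⟨u', hu'⟩ : ↥U) ⟨w', hw'⟩ (Or.inl h2)))
  · rintro ⟨hNI, htop⟩ x hx y hy
    obtain ⟨u, hu, hxu⟩ := hNI x hx
    obtain ⟨u', hu', hyu⟩ := hNI y hy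
    have hsup : (inducedPart U s t ε ⊔ γ) ⟨u, hu⟩ ⟨u', hu'⟩ := by rw [htop]; trivial
    have hmid := lift_sup ((sup_rel_iff _ γ).mp hsup)
    refine EqvGen.trans _ _ _
      (eqvGen_mono' (fun p q hpq => EqvGen.rel p q (Or.inl hpq)) hxu) ?_
    exact EqvGen.trans _ _ _ hmid
      (EqvGen.symm _ _ (eqvGen_mono' (fun p q hpq => EqvGen.rel p q (Or.inl hpq)) hyu))


lemma noIslands_self (U : Set V) (s t : E → V) (ε : E → Bool) :
    NoIslands U U s t ε :=
  fun x hx => ⟨x, hx, EqvGen.refl x⟩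

lemma connectedModOn_congr {S : Set V} {s t : E → V} {σ σ' : V → V → Prop} {ε : E → Bool}
    (h1 : ∀ a b, σ a b → EqvGen (fun a b => edgeAdj s t ε a b ∨ σ' a b) a b)
    (h2 : ∀ a b, σ' a b → EqvGen (fun a b => edgeAdj s t ε a b ∨ σ a b) a b) :
    ConnectedModOn S s t σ ε ↔ ConnectedModOn S s t σ' ε := by
  constructor <;> intro h x hx y hy
  · refine eqvGen_mono' (fun a b hab => ?_) (h x hx y hy)
    rcases hab with hab | hab
    · exact EqvGen.rel _ _ (Or.inl hab)
    · exact h1 a b hab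
  · refine eqvGen_mono' (fun a b hab => ?_) (h x hx y hy)
    rcases hab with hab | hab
    · exact EqvGen.rel _ _ (Or.inl hab)
    · exact h2 a b hab

lemma connectedModOn_bot {S U : Set V} {s t : E → V} {ε : E → Bool} :
    ConnectedModOn S s t (partRel U (⊥ : Setoid ↥U)) ε ↔ ConnectedState S s t ε := by
  refine connectedModOn_congr (fun a b hab => ?_) (fun a b hab => hab.elim)
  obtain ⟨ha, hb, hr⟩ := hab
  have : a = b := congrArg Subtype.val hr
  exact this ▸ EqvGen.refl a

lemma connectedModOn_top {U : Set V} {s t : E → V} {ε : E → Bool} :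
    ConnectedModOn U s t (partRel U (⊤ : Setoid ↥U)) ε := by
  intro x hx y hy
  exact EqvGen.rel _ _ (Or.inr ⟨hx, hy, trivial⟩)

section elim
variable {EK EH : Type} {sK tK : EK → V} {sH tH : EH → V}
  {εK : EK → Bool} {εH : EH → Bool}

lemma edgeAdj_elim {x y : V} :
    edgeAdj (Sum.elim sK sH) (Sum.elim tK tH) (Sum.elim εK εH) x y ↔
      edgeAdj sK tK εK x y ∨ edgeAdj sH tH εH x y := by
  constructor
  · rintro ⟨e, he, hor⟩
    cases e with
    | inl e => exact Or.inl ⟨e, he, hor⟩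
    | inr e => exact Or.inr ⟨e, he, hor⟩
  · rintro (⟨e, he, hor⟩ | ⟨e, he, hor⟩)
    · exact ⟨Sum.inl e, he, hor⟩
    · exact ⟨Sum.inr e, he, hor⟩

lemma mem_of_adjK {VK : Set V} (hK : ∀ e, sK e ∈ VK ∧ tK e ∈ VK) {x y : V}
    (h : edgeAdj sK tK εK x y) : x ∈ VK ∧ y ∈ VK := by
  obtain ⟨e, _, (⟨hs, ht⟩ | ⟨hs, ht⟩)⟩ := h
  · exact ⟨hs ▸ (hK e).1, ht ▸ (hK e).2⟩
  · exact ⟨ht ▸ (hK e).2, hs ▸ (hK e).1⟩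

lemma connG_iff {VK : Set V} (hK : ∀ e, sK e ∈ VK ∧ tK e ∈ VK) :
    ConnectedState Set.univ (Sum.elim sK sH) (Sum.elim tK tH) (Sum.elim εK εH) ↔
      ConnectedModOn Set.univ sH tH (partRel VK (inducedPart VK sK tK εK)) εH := by
  have step : ∀ {x y : V}, edgeAdj sK tK εK x y →
      EqvGen (fun a b => edgeAdj sH tH εH a b ∨
        partRel VK (inducedPart VK sK tK εK) a b) x y := by
    intro x y h
    exact EqvGen.rel _ _ (Or.inr ⟨(mem_of_adjK hK h).1, (mem_of_adjK hK h).2,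
      EqvGen.rel _ _ h⟩)
  constructor <;> intro h x hx y hy
  · refine eqvGen_mono' (fun a b hab => ?_) (h x hx y hy)
    rcases hab with hab | hab
    · rcases edgeAdj_elim.mp hab with hab | hab
      · exact step hab
      · exact EqvGen.rel _ _ (Or.inl hab)
    · exact hab.elim
  · refine eqvGen_mono' (fun a b hab => ?_) (h x hx y hy)
    rcases hab with hab | ⟨ha, hb, hr⟩
    · exact EqvGen.rel _ _ (Or.inl (edgeAdj_elim.mpr (Or.inr hab)))
    · refine eqvGen_mono' (fun p q hpq => EqvGen.rel p q ?_) (hr : EqvGen _ a b)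
      exact Or.inl (edgeAdj_elim.mpr (Or.inl hpq))

end elim

lemma beta_top {U : Type} [Finite U] (β : Matrix (Setoid U) (Setoid U) ℝ)
    (hβ2 : connMatrix U * β = 1) (γ' : Setoid U) :
    β ⊤ γ' = if γ' = ⊥ then 1 else 0 := by
  classical
  have h := Matrix.ext_iff.mpr hβ2 ⊥ γ'
  rw [Matrix.mul_apply] at h
  have hsum : ∑ γ, connMatrix U ⊥ γ * β γ γ' = β ⊤ γ' := by
    rw [Finset.sum_eq_single (⊤ : Setoid U)]
    · simp [connMatrix]
    · intro γ _ hγ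
      simp [connMatrix, bot_sup_eq, hγ]
    · simp
  rw [hsum, Matrix.one_apply] at h
  rw [h]
  by_cases hc : γ' = ⊥ <;> simp [hc, eq_comm]

lemma matrix_key {U : Type} [Finite U] (β : Matrix (Setoid U) (Setoid U) ℝ)
    (hβ2 : connMatrix U * β = 1) (P Q : Setoid U) :
    ∑ γ : Setoid U, ∑ γ' : Setoid U,
      β γ γ' * (if P ⊔ γ = ⊤ then (1:ℝ) else 0) * (if Q ⊔ γ' = ⊤ then (1:ℝ) else 0)
      = if P ⊔ Q = ⊤ then 1 else 0 := by
  classical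
  have h2 : ((connMatrix U * β) * connMatrix U) P Q = connMatrix U P Q := by
    rw [hβ2, Matrix.one_mul]
  calc ∑ γ : Setoid U, ∑ γ' : Setoid U,
      β γ γ' * (if P ⊔ γ = ⊤ then (1:ℝ) else 0) * (if Q ⊔ γ' = ⊤ then (1:ℝ) else 0)
      = ∑ γ : Setoid U, ∑ γ' : Setoid U,
        connMatrix U P γ * β γ γ' * connMatrix U γ' Q := by
        refine Finset.sum_congr rfl fun γ _ => Finset.sum_congr rfl fun γ' _ => ?_
        simp only [connMatrix, sup_comm γ' Q]
        ring
    _ = ∑ γ' : Setoid U, ∑ γ : Setoid U,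
        connMatrix U P γ * β γ γ' * connMatrix U γ' Q := Finset.sum_comm
    _ = ∑ γ' : Setoid U, (∑ γ : Setoid U,
        connMatrix U P γ * β γ γ') * connMatrix U γ' Q := by
        simp [Finset.sum_mul]
    _ = ((connMatrix U * β) * connMatrix U) P Q := by
        rw [Matrix.mul_apply]
        exact Finset.sum_congr rfl fun γ' _ => by rw [Matrix.mul_apply]
    _ = connMatrix U P Q := h2
    _ = _ := rfl


lemma qdot_proj {L : Type} [Fintype L] (C : Set L) (x : L → ℂ) :
    qdot x (projC C x) = ∑ ε, if ε ∈ C then (starRingEnd ℂ) (x ε) * x ε else 0 := by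
  rw [qdot]
  refine Finset.sum_congr rfl fun ε _ => ?_
  by_cases h : ε ∈ C <;> simp [projC, h]

lemma amp_sq {EH : Type} [Fintype EH] (p : EH → ℝ) (hp : ∀ e, p e ∈ Set.Icc (0:ℝ) 1)
    (εH : EH → Bool) :
    (starRingEnd ℂ) (∏ e, if εH e then (Real.sqrt (p e) : ℂ) else (Real.sqrt (1 - p e) : ℂ)) *
      (∏ e, if εH e then (Real.sqrt (p e) : ℂ) else (Real.sqrt (1 - p e) : ℂ))
      = ((stProb p εH : ℝ) : ℂ) := by
  rw [map_prod, ← Finset.prod_mul_distrib, stProb, Complex.ofReal_prod]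
  refine Finset.prod_congr rfl fun e _ => ?_
  rcases hp e with ⟨h0, h1⟩
  by_cases h : εH e <;>
    simp [h, Complex.conj_ofReal, ← Complex.ofReal_mul,
      Real.mul_self_sqrt h0, Real.mul_self_sqrt (sub_nonneg.2 h1)]

lemma sum_swap4 {α β γ δ : Type} [Fintype α] [Fintype β] [Fintype γ] [Fintype δ]
    (f : α → β → γ → δ → ℂ) :
    ∑ a, ∑ b, ∑ c, ∑ d, f a b c d = ∑ c, ∑ d, ∑ a, ∑ b, f a b c d :=
  calc ∑ a, ∑ b, ∑ c, ∑ d, f a b c d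
      = ∑ a, ∑ c, ∑ b, ∑ d, f a b c d :=
        Finset.sum_congr rfl fun _ _ => Finset.sum_comm
    _ = ∑ a, ∑ c, ∑ d, ∑ b, f a b c d :=
        Finset.sum_congr rfl fun _ _ => Finset.sum_congr rfl fun _ _ => Finset.sum_comm
    _ = ∑ c, ∑ a, ∑ d, ∑ b, f a b c d := Finset.sum_comm
    _ = ∑ c, ∑ d, ∑ a, ∑ b, f a b c d :=
        Finset.sum_congr rfl fun _ _ => Finset.sum_comm

lemma pointwise {V EK EH : Type} [Fintype V]
    (VK : Set V) (hU : VK.Nonempty)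
    (sK tK : EK → V) (hK : ∀ e, sK e ∈ VK ∧ tK e ∈ VK)
    (sH tH : EH → V)
    (β : Matrix (Setoid ↥VK) (Setoid ↥VK) ℝ)
    (hβ2 : connMatrix ↥VK * β = 1)
    (εK : EK → Bool) (εH : EH → Bool) :
    (if ConnectedState Set.univ (Sum.elim sK sH) (Sum.elim tK tH) (Sum.elim εK εH)
       then (1:ℝ) else 0)
    = ∑ γ : Setoid ↥VK, ∑ γ' : Setoid ↥VK, β γ γ' *
        (if ConnectedModOn VK sK tK (partRel VK γ) εK then (1:ℝ) else 0) *
        (if ConnectedModOn Set.univ sH tH (partRel VK γ') εH then (1:ℝ) else 0) := by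
  classical
  have hConnK : ∀ γ : Setoid ↥VK, ConnectedModOn VK sK tK (partRel VK γ) εK ↔
      inducedPart VK sK tK εK ⊔ γ = ⊤ := fun γ =>
    (connectedModOn_iff (subset_refl VK) hU sK tK γ εK).trans
      (and_iff_right (noIslands_self VK sK tK εK))
  have hConnH : ∀ γ' : Setoid ↥VK, ConnectedModOn Set.univ sH tH (partRel VK γ') εH ↔
      (NoIslands Set.univ VK sH tH εH ∧ inducedPart VK sH tH εH ⊔ γ' = ⊤) :=
    fun γ' => connectedModOn_iff (Set.subset_univ VK) hU sH tH γ' εH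
  have hConnG : ConnectedState Set.univ (Sum.elim sK sH) (Sum.elim tK tH)
      (Sum.elim εK εH) ↔
      (NoIslands Set.univ VK sH tH εH ∧
        inducedPart VK sH tH εH ⊔ inducedPart VK sK tK εK = ⊤) :=
    (connG_iff hK).trans (hConnH _)
  by_cases hNI : NoIslands Set.univ VK sH tH εH
  · simp only [hConnG, hConnK, hConnH, hNI, true_and]
    rw [sup_comm (inducedPart VK sH tH εH) (inducedPart VK sK tK εK)]
    exact (matrix_key β hβ2 _ _).symm
  · simp only [hConnG, hConnH, hNI, false_and, if_false, mul_zero, Finset.sum_const_zero]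


lemma full_splitting {V EK EH : Type} [Fintype V] [Fintype EK] [Fintype EH]
    (VK : Set V) (hU : VK.Nonempty)
    (sK tK : EK → V) (hK : ∀ e, sK e ∈ VK ∧ tK e ∈ VK)
    (sH tH : EH → V)
    (β : Matrix (Setoid ↥VK) (Setoid ↥VK) ℝ)
    (hβ2 : connMatrix ↥VK * β = 1)
    (ψK : (EK → Bool) → ℂ)
    (p : EH → ℝ) (hp : ∀ e, p e ∈ Set.Icc (0:ℝ) 1) :
    qdot (vtens ψK (fun εH : EH → Bool =>
        ∏ e, if εH e then (Real.sqrt (p e) : ℂ) else (Real.sqrt (1 - p e) : ℂ)))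
      (projC {εp : (EK → Bool) × (EH → Bool) |
          ConnectedState Set.univ (Sum.elim sK sH) (Sum.elim tK tH)
            (Sum.elim εp.1 εp.2)}
        (vtens ψK (fun εH : EH → Bool =>
          ∏ e, if εH e then (Real.sqrt (p e) : ℂ) else (Real.sqrt (1 - p e) : ℂ))))
    = ∑ γ : Setoid ↥VK, ∑ γ' : Setoid ↥VK,
        (β γ γ' : ℂ) *
          qdot ψK (projC {ε : EK → Bool |
              ConnectedModOn VK sK tK (partRel VK γ) ε} ψK) *
          (relOf p (ConnectedModOn Set.univ sH tH (partRel VK γ')) : ℂ) := by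
  classical
  set A : (EH → Bool) → ℂ := fun εH =>
    ∏ e, if εH e then (Real.sqrt (p e) : ℂ) else (Real.sqrt (1 - p e) : ℂ) with hA
  set w : (EK → Bool) → ℂ := fun εK => (starRingEnd ℂ) (ψK εK) * ψK εK with hw
  set q : (EH → Bool) → ℂ := fun εH => ((stProb p εH : ℝ) : ℂ) with hq
  -- Step 1: expand the LHS
  have lhs_eq : qdot (vtens ψK A) (projC {εp : (EK → Bool) × (EH → Bool) |
      ConnectedState Set.univ (Sum.elim sK sH) (Sum.elim tK tH)
        (Sum.elim εp.1 εp.2)} (vtens ψK A))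
      = ∑ εK : EK → Bool, ∑ εH : EH → Bool,
          (if ConnectedState Set.univ (Sum.elim sK sH) (Sum.elim tK tH)
              (Sum.elim εK εH) then w εK * q εH else 0) := by
    rw [qdot_proj, Fintype.sum_prod_type]
    refine Finset.sum_congr rfl fun εK _ => Finset.sum_congr rfl fun εH _ => ?_
    simp only [Set.mem_setOf_eq]
    by_cases h : ConnectedState Set.univ (Sum.elim sK sH) (Sum.elim tK tH)
        (Sum.elim εK εH)
    · rw [if_pos h, if_pos h, vtens, map_mul]
      have := amp_sq p hp εH
      calc (starRingEnd ℂ) (ψK (εK, εH).1) * (starRingEnd ℂ) (A (εK, εH).2) *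
            (ψK (εK, εH).1 * A (εK, εH).2)
          = ((starRingEnd ℂ) (ψK εK) * ψK εK) *
            ((starRingEnd ℂ) (A εH) * A εH) := by ring
        _ = w εK * q εH := by rw [this]
    · rw [if_neg h, if_neg h]
  rw [lhs_eq]
  -- Step 2: expand the RHS factors
  have qr_eq : ∀ γ : Setoid ↥VK,
      qdot ψK (projC {ε : EK → Bool |
          ConnectedModOn VK sK tK (partRel VK γ) ε} ψK)
      = ∑ εK : EK → Bool,
          (if ConnectedModOn VK sK tK (partRel VK γ) εK then w εK else 0) := by
    intro γ
    rw [qdot_proj]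
    rfl
  have rel_eq : ∀ γ' : Setoid ↥VK,
      ((relOf p (ConnectedModOn Set.univ sH tH (partRel VK γ')) : ℝ) : ℂ)
      = ∑ εH : EH → Bool,
          (if ConnectedModOn Set.univ sH tH (partRel VK γ') εH then q εH else 0) := by
    intro γ'
    rw [relOf, Complex.ofReal_sum]
    refine Finset.sum_congr rfl fun εH _ => ?_
    by_cases h : ConnectedModOn Set.univ sH tH (partRel VK γ') εH <;> simp [h, hq]
  -- Step 3: pointwise identity, complexified
  have pointC : ∀ (εK : EK → Bool) (εH : EH → Bool),
      (if ConnectedState Set.univ (Sum.elim sK sH) (Sum.elim tK tH)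
          (Sum.elim εK εH) then w εK * q εH else 0)
      = ∑ γ : Setoid ↥VK, ∑ γ' : Setoid ↥VK, (β γ γ' : ℂ) *
          (if ConnectedModOn VK sK tK (partRel VK γ) εK then w εK else 0) *
          (if ConnectedModOn Set.univ sH tH (partRel VK γ') εH then q εH else 0) := by
    intro εK εH
    have hr := pointwise VK hU sK tK hK sH tH β hβ2 εK εH
    have hc := congrArg (fun r : ℝ => (r : ℂ)) hr
    simp only [Complex.ofReal_sum, Complex.ofReal_mul,
      apply_ite (fun r : ℝ => (r : ℂ)), Complex.ofReal_one, Complex.ofReal_zero] at hc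
    calc (if ConnectedState Set.univ (Sum.elim sK sH) (Sum.elim tK tH)
            (Sum.elim εK εH) then w εK * q εH else 0)
        = w εK * q εH * (if ConnectedState Set.univ (Sum.elim sK sH)
            (Sum.elim tK tH) (Sum.elim εK εH) then (1:ℂ) else 0) := by
          split_ifs <;> ring
      _ = w εK * q εH * ∑ γ : Setoid ↥VK, ∑ γ' : Setoid ↥VK, (β γ γ' : ℂ) *
            (if ConnectedModOn VK sK tK (partRel VK γ) εK then (1:ℂ) else 0) *
            (if ConnectedModOn Set.univ sH tH (partRel VK γ') εH
              then (1:ℂ) else 0) := by rw [hc]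
      _ = _ := by
          rw [Finset.mul_sum]
          refine Finset.sum_congr rfl fun γ _ => ?_
          rw [Finset.mul_sum]
          refine Finset.sum_congr rfl fun γ' _ => ?_
          split_ifs <;> ring
  calc ∑ εK : EK → Bool, ∑ εH : EH → Bool,
        (if ConnectedState Set.univ (Sum.elim sK sH) (Sum.elim tK tH)
            (Sum.elim εK εH) then w εK * q εH else 0)
      = ∑ εK : EK → Bool, ∑ εH : EH → Bool, ∑ γ : Setoid ↥VK, ∑ γ' : Setoid ↥VK,
          (β γ γ' : ℂ) *
          (if ConnectedModOn VK sK tK (partRel VK γ) εK then w εK else 0) *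
          (if ConnectedModOn Set.univ sH tH (partRel VK γ') εH then q εH else 0) :=
        Finset.sum_congr rfl fun εK _ => Finset.sum_congr rfl fun εH _ => pointC εK εH
    _ = ∑ γ : Setoid ↥VK, ∑ γ' : Setoid ↥VK, ∑ εK : EK → Bool, ∑ εH : EH → Bool,
          (β γ γ' : ℂ) *
          (if ConnectedModOn VK sK tK (partRel VK γ) εK then w εK else 0) *
          (if ConnectedModOn Set.univ sH tH (partRel VK γ') εH then q εH else 0) :=
        sum_swap4 _
    _ = _ := by
        refine Finset.sum_congr rfl fun γ _ => Finset.sum_congr rfl fun γ' _ => ?_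
        rw [qr_eq, rel_eq, mul_assoc, Finset.sum_mul_sum, Finset.mul_sum]
        refine Finset.sum_congr rfl fun εK _ => ?_
        rw [Finset.mul_sum]
        exact Finset.sum_congr rfl fun εH _ => by ring

end QSCaux

/-- quantum sublayer correction formula.  For a classical network
`H` (spanning all vertices) with a quantum sublayer `K` on the vertex set `VK`,
the quantum reliability of the hybrid network equals the classical reliability of
`H` plus the quantum corrections indexed by the non-trivial partitions `γ ≠ t`. -/
theorem quantum_sublayer_correction {V EK EH : Type}
    [Fintype V] [Fintype EK] [Fintype EH]
    (VK : Set V) (hU : VK.Nonempty)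
    (sK tK : EK → V) (hK : ∀ e, sK e ∈ VK ∧ tK e ∈ VK)
    (sH tH : EH → V)
    (β : Matrix (Setoid ↥VK) (Setoid ↥VK) ℝ)
    (hβ : β * connMatrix ↥VK = 1 ∧ connMatrix ↥VK * β = 1)
    (ψK : (EK → Bool) → ℂ) (hψK : qdot ψK ψK = 1)
    (p : EH → ℝ) (hp : ∀ e, p e ∈ Set.Icc (0:ℝ) 1) :
    qdot (vtens ψK (fun εH : EH → Bool =>
        ∏ e, if εH e then (Real.sqrt (p e) : ℂ) else (Real.sqrt (1 - p e) : ℂ)))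
      (projC {εp : (EK → Bool) × (EH → Bool) |
          ConnectedState Set.univ (Sum.elim sK sH) (Sum.elim tK tH)
            (Sum.elim εp.1 εp.2)}
        (vtens ψK (fun εH : EH → Bool =>
          ∏ e, if εH e then (Real.sqrt (p e) : ℂ) else (Real.sqrt (1 - p e) : ℂ))))
      = (relOf p (ConnectedState Set.univ sH tH) : ℂ)
        + ∑ γ ∈ Finset.univ.filter (fun γ : Setoid ↥VK => γ ≠ ⊤),
            ∑ γ' : Setoid ↥VK,
              (β γ γ' : ℂ) *
                qdot ψK (projC {ε : EK → Bool |
                    ConnectedModOn VK sK tK (partRel VK γ) ε} ψK) *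
                (relOf p (ConnectedModOn Set.univ sH tH (partRel VK γ')) : ℂ) := by
  classical
  rw [QSCaux.full_splitting VK hU sK tK hK sH tH β hβ.2 ψK p hp]
  set F : Setoid ↥VK → ℂ := fun γ => ∑ γ' : Setoid ↥VK,
      (β γ γ' : ℂ) *
        qdot ψK (projC {ε : EK → Bool |
            ConnectedModOn VK sK tK (partRel VK γ) ε} ψK) *
        (relOf p (ConnectedModOn Set.univ sH tH (partRel VK γ')) : ℂ) with hF
  have hproj : projC {ε : EK → Bool |
      ConnectedModOn VK sK tK (partRel VK (⊤ : Setoid ↥VK)) ε} ψK = ψK := by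
    funext ε
    exact if_pos QSCaux.connectedModOn_top
  have hrel : relOf p (ConnectedModOn Set.univ sH tH (partRel VK (⊥ : Setoid ↥VK)))
      = relOf p (ConnectedState Set.univ sH tH) := by
    unfold relOf
    exact Finset.sum_congr rfl fun ε _ => if_congr QSCaux.connectedModOn_bot rfl rfl
  have htop : F ⊤ = (relOf p (ConnectedState Set.univ sH tH) : ℂ) := by
    calc F ⊤ = ∑ γ' : Setoid ↥VK,
        (if γ' = ⊥ then (1:ℂ) else 0) *
          (relOf p (ConnectedModOn Set.univ sH tH (partRel VK γ')) : ℂ) := by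
          rw [hF]
          refine Finset.sum_congr rfl fun γ' _ => ?_
          rw [hproj, hψK, QSCaux.beta_top β hβ.2 γ']
          by_cases hb : γ' = ⊥ <;> simp [hb]
      _ = (relOf p (ConnectedModOn Set.univ sH tH
            (partRel VK (⊥ : Setoid ↥VK))) : ℂ) := by
          rw [Finset.sum_eq_single (⊥ : Setoid ↥VK)]
          · simp
          · intro b _ hb; simp [hb]
          · simp
      _ = _ := by rw [hrel]
  have hsum : ∑ γ : Setoid ↥VK, F γ
      = F ⊤ + ∑ γ ∈ Finset.univ.filter (fun γ : Setoid ↥VK => γ ≠ ⊤), F γ := by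
    rw [← Finset.sum_filter_add_sum_filter_not Finset.univ
      (fun γ : Setoid ↥VK => γ = ⊤) F]
    congr 1
    rw [Finset.filter_eq' Finset.univ (⊤ : Setoid ↥VK), if_pos (Finset.mem_univ _),
      Finset.sum_singleton]
  rw [hsum, htop]
end
end
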